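/- arXiv:1904.10041 — 3 statements merged into one kernel-verified Lean document; each statement's English description precedes it below -/
import Mathlib

section
/- Grone's theorem: Let G = (V,E) be a chordal graph with maximal cliques C_1,…,C_p. A partial symmetric matrix X with sparsity pattern E admits a positive semidefinite completion if and only if each principal submatrix X[C_k, C_k] is positive semidefinite for k = 1,…,p. -/
/-- A graph is chordal if every cycle of length at least 4 has a chord. -/
def IsChordal {V : Type*} (G : SimpleGraph V) : Prop :=
  ∀ (v : V) (w : G.Walk v v), w.IsCycle → 4 ≤ w.length →
    ∃ x y, G.Adj x y ∧ x ∈ w.support ∧ y ∈ w.support ∧ s(x, y) ∉ w.edges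

/-- A maximal clique: a clique not properly contained in any other clique. -/
def IsMaxClique {V : Type*} (G : SimpleGraph V) (s : Set V) : Prop :=
  G.IsClique s ∧ ∀ t : Set V, G.IsClique t → s ⊆ t → s = t

/-- `X` has a PSD completion respecting the sparsity pattern given by the graph `G`. -/
def HasPSDCompletion {n : ℕ} (G : SimpleGraph (Fin n)) (X : Matrix (Fin n) (Fin n) ℝ) :
    Prop :=
  ∃ Y : Matrix (Fin n) (Fin n) ℝ, Y.PosSemidef ∧ (∀ i, Y i i = X i i) ∧
    ∀ i j, G.Adj i j → Y i j = X i j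


set_option linter.unusedSectionVars false


open Matrix

lemma quad_lin_zero {d β : ℝ} (h : ∀ t : ℝ, 0 ≤ d*t^2 + 2*β*t) : β = 0 := by
  have hd : 0 ≤ d := by nlinarith [h 1, h (-1)]
  have hpos : (0:ℝ) < d + 1 := by linarith
  set s : ℝ := β / (d+1) with hs
  have hβ : β = s * (d+1) := by rw [hs, div_mul_cancel₀ β hpos.ne']
  have key := h (-s)
  rw [hβ] at key
  have hsq : s^2 ≤ 0 := by nlinarith [mul_nonneg hd (sq_nonneg s)]
  have hs0 : s = 0 := sq_eq_zero_iff.mp (le_antisymm hsq (sq_nonneg s))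
  rw [hβ, hs0, zero_mul]

/-- quadratic form of a bordered matrix over `Option ι`. -/
lemma quad_option {ι : Type} [Fintype ι] (W : Matrix (Option ι) (Option ι) ℝ)
    (hsym : ∀ i, W (some i) none = W none (some i)) (t : ℝ) (w : ι → ℝ) :
    (fun o => Option.elim o t w) ⬝ᵥ (W *ᵥ (fun o => Option.elim o t w)) =
      W none none * t^2 + 2*t*((fun i => W none (some i)) ⬝ᵥ w)
        + w ⬝ᵥ ((Matrix.of fun i j => W (some i) (some j)) *ᵥ w) := by
  simp only [dotProduct, Matrix.mulVec, Fintype.sum_option, Option.elim,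
    Matrix.of_apply, hsym, mul_add, add_mul, Finset.mul_sum, Finset.sum_add_distrib]
  ring_nf
  have h1 : (∑ x : ι, t * w x * W none (some x)) + (∑ x : ι, t * W none (some x) * w x)
      = ∑ x : ι, t * 2 * W none (some x) * w x := by
    rw [← Finset.sum_add_distrib]; exact Finset.sum_congr rfl fun x _ => by ring
  linarith [h1, (Finset.sum_congr rfl fun x _ => by ring : ∑ x : ι, t * W none (some x) * w x * 2
    = ∑ x : ι, t * 2 * W none (some x) * w x)]
section part1b
open Matrix
variable {ι : Type} [Fintype ι] [DecidableEq ι]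

lemma bordered_symm {W : Matrix (Option ι) (Option ι) ℝ} (hW : W.IsHermitian) :
    ∀ i, W (some i) none = W none (some i) := fun i => by
  simpa using hW.apply none (some i)

lemma bordered_block_psd (W : Matrix (Option ι) (Option ι) ℝ) (hW : W.PosSemidef) :
    (Matrix.of fun i j : ι => W (some i) (some j)).PosSemidef :=
  hW.submatrix some

lemma bordered_ker (W : Matrix (Option ι) (Option ι) ℝ) (hW : W.PosSemidef)
    (x : ι → ℝ) (hx : (Matrix.of fun i j : ι => W (some i) (some j)) *ᵥ x = 0) :
    (fun i => W none (some i)) ⬝ᵥ x = 0 := by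
  apply quad_lin_zero (d := W none none)
  intro t
  have h := hW.dotProduct_mulVec_nonneg (fun o => Option.elim o t x)
  rw [star_trivial, quad_option W (bordered_symm hW.1) t x, hx, dotProduct_zero, add_zero] at h
  calc (0:ℝ) ≤ W none none * t ^ 2 + 2 * t * ((fun i => W none (some i)) ⬝ᵥ x) := h
    _ = W none none * t ^ 2 + 2 * ((fun i => W none (some i)) ⬝ᵥ x) * t := by ring

lemma bordered_le (W : Matrix (Option ι) (Option ι) ℝ) (hW : W.PosSemidef)
    (z : ι → ℝ) (hz : (Matrix.of fun i j : ι => W (some i) (some j)) *ᵥ z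
      = fun i => W none (some i)) :
    z ⬝ᵥ (fun i => W none (some i)) ≤ W none none := by
  have h := hW.dotProduct_mulVec_nonneg (fun o => Option.elim o 1 (-z))
  rw [star_trivial, quad_option W (bordered_symm hW.1) 1 (-z)] at h
  rw [mulVec_neg, hz] at h
  have h1 : (fun i => W none (some i)) ⬝ᵥ (-z) = -((fun i => W none (some i)) ⬝ᵥ z) := by
    simp
  have h2 : (-z) ⬝ᵥ -(fun i => W none (some i)) = z ⬝ᵥ (fun i => W none (some i)) := by
    simp
  rw [h1, h2] at h
  have h3 : (fun i => W none (some i)) ⬝ᵥ z = z ⬝ᵥ (fun i => W none (some i)) :=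
    dotProduct_comm _ _
  rw [h3] at h
  nlinarith [h]

lemma psd_exists_mulVec (M : Matrix ι ι ℝ) (hM : M.PosSemidef) (b : ι → ℝ)
    (hb : ∀ x, M *ᵥ x = 0 → b ⬝ᵥ x = 0) : ∃ z, M *ᵥ z = b := by
  classical
  set T : EuclideanSpace ℝ ι →ₗ[ℝ] EuclideanSpace ℝ ι := Matrix.toEuclideanLin M with hT
  have hsym : LinearMap.IsSymmetric T := Matrix.isHermitian_iff_isSymmetric.1 hM.1
  have happ : ∀ v : EuclideanSpace ℝ ι, T v = (WithLp.equiv 2 (ι → ℝ)).symm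
      (M *ᵥ (WithLp.equiv 2 (ι → ℝ)) v) := fun v => Matrix.toEuclideanLin_apply M v
  have hle : LinearMap.range T ≤ (LinearMap.ker T)ᗮ := by
    rintro _ ⟨x, rfl⟩
    rw [Submodule.mem_orthogonal]
    intro y hy
    have : T y = 0 := hy
    rw [← hsym y x, this, inner_zero_left]
  have heq : LinearMap.range T = (LinearMap.ker T)ᗮ := by
    apply Submodule.eq_of_le_of_finrank_eq hle
    have h1 := LinearMap.finrank_range_add_finrank_ker T
    have h2 := Submodule.finrank_add_finrank_orthogonal (K := LinearMap.ker T)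
    omega
  have hbmem : (WithLp.equiv 2 (ι → ℝ)).symm b ∈ (LinearMap.ker T)ᗮ := by
    rw [Submodule.mem_orthogonal]
    intro y hy
    have hy0 : M *ᵥ (WithLp.equiv 2 (ι → ℝ)) y = 0 := by
      have : T y = 0 := hy
      rw [happ] at this
      have := congrArg (WithLp.equiv 2 (ι → ℝ)) this
      simpa using this
    have hb0 := hb _ hy0
    have hinner : (inner ℝ y ((WithLp.equiv 2 (ι → ℝ)).symm b) : ℝ) = ∑ i, y i * b i := by
      simp [PiLp.inner_apply, PiLp.toLp_apply, mul_comm]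
    rw [hinner]
    simpa [dotProduct, mul_comm] using hb0
  rw [← heq] at hbmem
  obtain ⟨z, hz⟩ := hbmem
  refine ⟨(WithLp.equiv 2 (ι → ℝ)) z, ?_⟩
  rw [happ] at hz
  simpa using congrArg (WithLp.equiv 2 (ι → ℝ)) hz

end part1b
section part1c
open Matrix
variable {ι : Type} [Fintype ι] [DecidableEq ι]

/-- Bordered completion of a PSD matrix. -/
noncomputable def borderMat (A : Matrix ι ι ℝ) (z : ι → ℝ) (d : ℝ) :
    Matrix (Option ι) (Option ι) ℝ :=
  Matrix.of fun i j =>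
    Option.elim i (Option.elim j d (fun j' => (A *ᵥ z) j'))
      (fun i' => Option.elim j ((A *ᵥ z) i') (fun j' => A i' j'))

lemma border_completion (A : Matrix ι ι ℝ) (hA : A.PosSemidef) (z : ι → ℝ) (d : ℝ)
    (hd : z ⬝ᵥ (A *ᵥ z) ≤ d) : (borderMat A z d).PosSemidef := by
  have hAt : Aᵀ = A := by
    ext i j; simpa using hA.1.apply i j
  have hzw : ∀ w : ι → ℝ, z ⬝ᵥ (A *ᵥ w) = (A *ᵥ z) ⬝ᵥ w := by
    intro w
    rw [dotProduct_mulVec, ← Matrix.mulVec_transpose, hAt]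
  refine .of_dotProduct_mulVec_nonneg ?_ ?_
  · ext i j
    cases i <;> cases j <;>
      simp [borderMat, conjTranspose_apply, star] <;>
      try rfl
    · exact (congrFun (congrFun hA.1 _) _)
  · intro x
    have hxe : x = fun o => Option.elim o (x none) (fun i => x (some i)) := by
      funext o; cases o <;> rfl
    rw [star_trivial, hxe, quad_option (borderMat A z d) (fun i => rfl)]
    set t := x none
    set w := fun i => x (some i)
    have hblock : (Matrix.of fun i j : ι => (borderMat A z d) (some i) (some j)) = A := rfl
    have hbord : (fun i => (borderMat A z d) none (some i)) = A *ᵥ z := rfl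
    rw [hblock, hbord]
    have key : (borderMat A z d) none none * t^2 + 2*t*((A *ᵥ z) ⬝ᵥ w) + w ⬝ᵥ (A *ᵥ w)
        = (d - z ⬝ᵥ (A *ᵥ z)) * t^2 + (w + t • z) ⬝ᵥ (A *ᵥ (w + t • z)) := by
      have h1 : (borderMat A z d) none none = d := rfl
      rw [h1, mulVec_add, mulVec_smul, dotProduct_add, add_dotProduct, add_dotProduct,
        dotProduct_smul, smul_dotProduct, smul_dotProduct, dotProduct_smul, hzw w]
      have h2 : w ⬝ᵥ (A *ᵥ z) = (A *ᵥ z) ⬝ᵥ w := dotProduct_comm _ _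
      rw [h2]
      simp only [smul_eq_mul]
      ring
    rw [key]
    have h3 := hA.dotProduct_mulVec_nonneg (w + t • z)
    rw [star_trivial] at h3
    have h4 : 0 ≤ (d - z ⬝ᵥ (A *ᵥ z)) * t^2 :=
      mul_nonneg (by linarith) (sq_nonneg t)
    linarith

lemma borderMat_none_none (A : Matrix ι ι ℝ) (z : ι → ℝ) (d : ℝ) :
    borderMat A z d none none = d := rfl
lemma borderMat_none_some (A : Matrix ι ι ℝ) (z : ι → ℝ) (d : ℝ) (i : ι) :
    borderMat A z d none (some i) = (A *ᵥ z) i := rfl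
lemma borderMat_some_none (A : Matrix ι ι ℝ) (z : ι → ℝ) (d : ℝ) (i : ι) :
    borderMat A z d (some i) none = (A *ᵥ z) i := rfl
lemma borderMat_some_some (A : Matrix ι ι ℝ) (z : ι → ℝ) (d : ℝ) (i j : ι) :
    borderMat A z d (some i) (some j) = A i j := rfl

end part1c
section part2
open SimpleGraph Walk

set_option linter.unusedSectionVars false

def IsChordal' {V : Type*} (G : SimpleGraph V) : Prop :=
  ∀ (v : V) (w : G.Walk v v), w.IsCycle → 4 ≤ w.length →
    ∃ x y, G.Adj x y ∧ x ∈ w.support ∧ y ∈ w.support ∧ s(x, y) ∉ w.edges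

def IsSimplicial {V : Type*} (G : SimpleGraph V) (v : V) : Prop :=
  ∀ x y, G.Adj v x → G.Adj v y → x ≠ y → G.Adj x y

lemma IsChordal'.comap {V W : Type*} (f : V ↪ W) {G : SimpleGraph W} (hG : IsChordal' G) :
    IsChordal' (G.comap f) := by
  intro v w hw hlen
  have hinj : Function.Injective ((SimpleGraph.Embedding.comap f G).toHom : V → W) :=
    f.injective
  have hc : (w.map (SimpleGraph.Embedding.comap f G).toHom).IsCycle :=
    (Walk.map_isCycle_iff_of_injective hinj).2 hw
  have hlen' : 4 ≤ (w.map (SimpleGraph.Embedding.comap f G).toHom).length := by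
    rwa [Walk.length_map]
  obtain ⟨x, y, hadj, hxs, hys, hne⟩ := hG _ _ hc hlen'
  rw [Walk.support_map, List.mem_map] at hxs hys
  obtain ⟨x', hx', rfl⟩ := hxs
  obtain ⟨y', hy', rfl⟩ := hys
  refine ⟨x', y', hadj, hx', hy', fun hmem => hne ?_⟩
  rw [Walk.edges_map]
  exact List.mem_map_of_mem hmem

variable {V : Type} [Fintype V] [DecidableEq V] {G : SimpleGraph V}

/-- the set of vertices reachable from `r` by walks avoiding `S`. -/
def compS (G : SimpleGraph V) (S : Finset V) (r : V) : Set V :=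
  {u | ∃ w : G.Walk r u, ∀ z ∈ w.support, z ∉ S}

lemma compS_self {S : Finset V} {r : V} (hr : r ∉ S) : r ∈ compS G S r :=
  ⟨Walk.nil, by simp [hr]⟩

lemma compS_not_mem_S {S : Finset V} {r u : V} (hu : u ∈ compS G S r) : u ∉ S := by
  obtain ⟨w, hw⟩ := hu
  exact hw u w.end_mem_support

lemma compS_start {S : Finset V} {r u : V} (hu : u ∈ compS G S r) : r ∉ S := by
  obtain ⟨w, hw⟩ := hu
  exact hw r w.start_mem_support

lemma compS_extend {S : Finset V} {r u x : V} (hu : u ∈ compS G S r) (hadj : G.Adj u x)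
    (hx : x ∉ S) : x ∈ compS G S r := by
  obtain ⟨w, hw⟩ := hu
  refine ⟨w.concat hadj, ?_⟩
  intro z hz
  rw [Walk.support_concat, List.mem_append] at hz
  rcases hz with hz | hz
  · exact hw z hz
  · simp only [List.mem_singleton] at hz; subst hz; exact hx

lemma compS_comm {S : Finset V} {r u : V} (hu : u ∈ compS G S r) : r ∈ compS G S u := by
  obtain ⟨w, hw⟩ := hu
  exact ⟨w.reverse, fun z hz => hw z (by rwa [Walk.support_reverse, List.mem_reverse] at hz)⟩

lemma compS_trans {S : Finset V} {r u v : V} (hu : u ∈ compS G S r) (hv : v ∈ compS G S u) :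
    v ∈ compS G S r := by
  obtain ⟨w1, hw1⟩ := hu
  obtain ⟨w2, hw2⟩ := hv
  refine ⟨w1.append w2, fun z hz => ?_⟩
  rw [Walk.mem_support_append_iff] at hz
  rcases hz with hz | hz
  · exact hw1 z hz
  · exact hw2 z hz

lemma compS_walk_support {S : Finset V} {r : V} :
    ∀ {c u : V} (w : G.Walk c u), c ∈ compS G S r → (∀ z ∈ w.support, z ∉ S) →
      ∀ z ∈ w.support, z ∈ compS G S r := by
  intro c u w
  induction w with
  | nil =>
    intro hc _ z hz
    rw [Walk.mem_support_nil_iff] at hz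
    subst hz; exact hc
  | @cons c e u hadj rest ih =>
    intro hc hav z hz
    have he : e ∈ compS G S r :=
      compS_extend hc hadj (hav e (by simp [Walk.support_cons]))
    rw [Walk.support_cons, List.mem_cons] at hz
    rcases hz with rfl | hz
    · exact hc
    · exact ih he (fun z' hz' => hav z' (by simp [Walk.support_cons, hz'])) z hz

/-- a walk avoiding `S` except at `x` and passing through `x` yields a neighbor of `x`
in the component. -/
lemma compS_walk_hit {S : Finset V} {r x : V} (hx : x ∈ S) :
    ∀ {c u : V} (w : G.Walk c u), c ∈ compS G S r →
      (∀ z ∈ w.support, z ∈ S → z = x) → x ∈ w.support →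
      ∃ n, n ∈ compS G S r ∧ G.Adj n x := by
  intro c u w
  induction w with
  | nil =>
    intro hc _ hxs
    rw [Walk.mem_support_nil_iff] at hxs
    subst hxs
    exact absurd hx (compS_not_mem_S hc)
  | @cons c e u hadj rest ih =>
    intro hc hav hxs
    by_cases hex : e = x
    · subst hex; exact ⟨c, hc, hadj⟩
    · have he : e ∉ S := fun h => hex (hav e (by simp [Walk.support_cons]) h)
      have he' : e ∈ compS G S r := compS_extend hc hadj he
      have hcx : c ≠ x := fun h => absurd hx (h ▸ compS_not_mem_S hc)
      rw [Walk.support_cons, List.mem_cons] at hxs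
      rcases hxs with rfl | hxs
      · exact absurd rfl hcx
      · exact ih he' (fun z hz hzS => hav z (by simp [Walk.support_cons, hz]) hzS) hxs

/-- separation predicate: `S` separates `a` from `b`. -/
def GSep (G : SimpleGraph V) (S : Finset V) (a b : V) : Prop :=
  a ∉ S ∧ b ∉ S ∧ b ∉ compS G S a

lemma sep_symm {S : Finset V} {a b : V} (h : GSep G S a b) : GSep G S b a :=
  ⟨h.2.1, h.1, fun ha => h.2.2 (compS_comm ha)⟩

lemma sep_exists {a b : V} (hab : ¬ G.Adj a b) (hne : a ≠ b) :
    ∃ S : Finset V, GSep G S a b := by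
  refine ⟨Finset.univ.filter (fun z => z ≠ a ∧ z ≠ b), by simp [hne], by simp [hne.symm], ?_⟩
  rintro ⟨w, hw⟩
  cases w with
  | nil => exact hne rfl
  | @cons a e b hadj rest =>
    have he : e ∈ (Walk.cons hadj rest).support := by simp [Walk.support_cons]
    have := hw e he
    simp only [Finset.mem_filter, Finset.mem_univ, true_and, not_and, not_not] at this
    by_cases hea : e = a
    · subst hea; exact absurd rfl hadj.ne
    · exact hab ((this hea) ▸ hadj)

end part2
section part2b
open SimpleGraph Walk
set_option linter.unusedSectionVars false
variable {V : Type} [Fintype V] [DecidableEq V]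

lemma exists_min_path (H : SimpleGraph V) {x y : V} (hr : Nonempty (H.Walk x y)) :
    ∃ p : H.Walk x y, p.IsPath ∧ ∀ q : H.Walk x y, p.length ≤ q.length := by
  classical
  have hset : ∃ n, ∃ w : H.Walk x y, w.length = n := ⟨hr.some.length, hr.some, rfl⟩
  obtain ⟨w, hw⟩ := Nat.find_spec hset
  refine ⟨w.bypass, Walk.bypass_isPath w, fun q => ?_⟩
  have h1 : w.bypass.length ≤ w.length := Walk.length_bypass_le w
  have h2 : Nat.find hset ≤ q.length := Nat.find_min' hset ⟨q, rfl⟩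
  omega

lemma edge_of_length_one {H : SimpleGraph V} {u w : V} (q : H.Walk u w) (h : q.length = 1) :
    s(u, w) ∈ q.edges := by
  cases q with
  | nil => simp at h
  | @cons _ e _ hadj rest =>
    cases rest with
    | nil => simp
    | cons _ _ => simp [Walk.length_cons] at h

lemma dropUntil_total {H : SimpleGraph V} {x y : V} (p : H.Walk x y) (u w : V)
    (hu : u ∈ p.support) (hw : w ∈ p.support) :
    w ∈ (p.dropUntil u hu).support ∨ u ∈ (p.dropUntil w hw).support := by
  induction p with
  | nil =>
    rw [Walk.mem_support_nil_iff] at hu hw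
    subst hu; subst hw
    left; exact Walk.start_mem_support _
  | @cons a e b hadj rest ih =>
    by_cases hau : a = u
    · left
      simp only [Walk.dropUntil, dif_pos hau]
      subst hau
      simpa using hw
    · by_cases haw : a = w
      · right
        simp only [Walk.dropUntil, dif_pos haw]
        subst haw
        simpa using hu
      · have hu' : u ∈ rest.support := by
          rw [Walk.support_cons, List.mem_cons] at hu
          exact hu.resolve_left (fun h => hau h.symm)
        have hw' : w ∈ rest.support := by
          rw [Walk.support_cons, List.mem_cons] at hw
          exact hw.resolve_left (fun h => haw h.symm)
        have := ih hu' hw'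
        simp only [Walk.dropUntil, dif_neg hau, dif_neg haw]
        exact this

lemma min_walk_chord_mem {H : SimpleGraph V} {x y u w : V} (p : H.Walk x y)
    (hmin : ∀ q : H.Walk x y, p.length ≤ q.length) (hadj : H.Adj u w)
    (hu : u ∈ p.support) (hw : w ∈ (p.dropUntil u hu).support) : s(u, w) ∈ p.edges := by
  set q1 := p.takeUntil u hu with hq1
  set q2 := p.dropUntil u hu with hq2
  have hsplit : q1.append q2 = p := Walk.take_spec p hu
  have hlen : q1.length + q2.length = p.length := by
    rw [← hsplit, Walk.length_append]
  set r1 := q2.takeUntil w hw with hr1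
  set r2 := q2.dropUntil w hw with hr2
  have hsplit2 : r1.append r2 = q2 := Walk.take_spec q2 hw
  have hlen2 : r1.length + r2.length = q2.length := by
    rw [← hsplit2, Walk.length_append]
  have hq' := hmin (q1.append (Walk.cons hadj r2))
  rw [Walk.length_append, Walk.length_cons] at hq'
  have hr1len : r1.length ≤ 1 := by omega
  have hr1pos : r1.length ≠ 0 := fun h0 => hadj.ne (Walk.eq_of_length_eq_zero h0)
  have hr1one : r1.length = 1 := by omega
  have hmem : s(u, w) ∈ r1.edges := edge_of_length_one r1 hr1one
  have hmem2 : s(u, w) ∈ q2.edges := Walk.edges_takeUntil_subset q2 hw hmem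
  exact Walk.edges_dropUntil_subset p hu hmem2

lemma min_walk_no_chord {H : SimpleGraph V} {x y u w : V} (p : H.Walk x y)
    (hmin : ∀ q : H.Walk x y, p.length ≤ q.length) (hadj : H.Adj u w)
    (hu : u ∈ p.support) (hw : w ∈ p.support) : s(u, w) ∈ p.edges := by
  rcases dropUntil_total p u w hu hw with h | h
  · exact min_walk_chord_mem p hmin hadj hu h
  · rw [Sym2.eq_swap]
    exact min_walk_chord_mem p hmin hadj.symm hw h

/-- Graph on vertex set `A` with the edge `xy` removed. -/
def sideGraph (G : SimpleGraph V) (A : Set V) (x y : V) : SimpleGraph V where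
  Adj u w := G.Adj u w ∧ u ∈ A ∧ w ∈ A ∧ s(u, w) ≠ s(x, y)
  symm := ⟨by
    rintro u w ⟨h1, h2, h3, h4⟩
    exact ⟨h1.symm, h3, h2, by rwa [Sym2.eq_swap]⟩⟩
  loopless := ⟨fun u h => G.loopless.irrefl u h.1⟩

lemma sideGraph_le {G : SimpleGraph V} {A : Set V} {x y : V} : sideGraph G A x y ≤ G :=
  fun _ _ h => h.1

lemma sideGraph_support {G : SimpleGraph V} {A : Set V} {x y : V} :
    ∀ {c u : V} (w : (sideGraph G A x y).Walk c u), c ∈ A → ∀ z ∈ w.support, z ∈ A := by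
  intro c u w
  induction w with
  | nil =>
    intro hc z hz
    rw [Walk.mem_support_nil_iff] at hz
    subst hz; exact hc
  | @cons a e b hadj rest ih =>
    intro hc z hz
    rw [Walk.support_cons, List.mem_cons] at hz
    rcases hz with rfl | hz
    · exact hc
    · exact ih hadj.2.2.1 z hz

/-- Transfer a `G`-walk whose support lies in `B ⊆ A` with `x ∉ B` into the side graph. -/
lemma walk_transfer_side {G : SimpleGraph V} {A B : Set V} {x y : V} {c u : V}
    (w : G.Walk c u) (hsup : ∀ z ∈ w.support, z ∈ B) (hBA : B ⊆ A) (hx : x ∉ B) :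
    ∀ e ∈ w.edges, e ∈ (sideGraph G A x y).edgeSet := by
  intro e he
  induction e using Sym2.ind with
  | _ p q =>
    have hp : p ∈ w.support := w.fst_mem_support_of_mem_edges he
    have hq : q ∈ w.support := w.snd_mem_support_of_mem_edges he
    have hadj : G.Adj p q := w.adj_of_mem_edges he
    refine ⟨hadj, hBA (hsup p hp), hBA (hsup q hq), fun hcontra => ?_⟩
    rw [Sym2.eq_iff] at hcontra
    rcases hcontra with ⟨rfl, rfl⟩ | ⟨rfl, rfl⟩
    · exact hx (hsup p hp)
    · exact hx (hsup q hq)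

lemma side_edges_le {G : SimpleGraph V} {A : Set V} {x y c u : V}
    (w : (sideGraph G A x y).Walk c u) : ∀ e ∈ w.edges, e ∈ G.edgeSet := by
  intro e he
  induction e using Sym2.ind with
  | _ p q => exact (w.adj_of_mem_edges he).1

end part2b
section part2c
open SimpleGraph Walk
set_option linter.unusedSectionVars false
variable {V : Type} [Fintype V] [DecidableEq V]

lemma sep_nbrs {G : SimpleGraph V} {a b : V} {S : Finset V}
    (hS : GSep G S a b) (hmin : ∀ S' : Finset V, GSep G S' a b → S.card ≤ S'.card)
    {s : V} (hs : s ∈ S) :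
    (∃ n ∈ compS G S a, G.Adj n s) ∧ (∃ n ∈ compS G S b, G.Adj n s) := by
  have hcard : (S.erase s).card < S.card := Finset.card_erase_lt_of_mem hs
  have hbase : b ∈ compS G (S.erase s) a := by
    by_contra h
    have hsep : GSep G (S.erase s) a b :=
      ⟨fun hmem => hS.1 (Finset.mem_of_mem_erase hmem),
       fun hmem => hS.2.1 (Finset.mem_of_mem_erase hmem), h⟩
    exact absurd (hmin _ hsep) (by omega)
  obtain ⟨w, hw⟩ := hbase
  have hw' : ∀ z ∈ w.support, z ∈ S → z = s := by
    intro z hz hzS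
    by_contra hne
    exact hw z hz (Finset.mem_erase.2 ⟨hne, hzS⟩)
  have hsx : s ∈ w.support := by
    by_contra hns
    exact hS.2.2 ⟨w, fun z hz hzS => hns ((hw' z hz hzS) ▸ hz)⟩
  constructor
  · exact compS_walk_hit hs w (compS_self hS.1) hw' hsx
  · refine compS_walk_hit hs w.reverse (compS_self hS.2.1) ?_ ?_
    · intro z hz hzS
      exact hw' z (by rwa [Walk.support_reverse, List.mem_reverse] at hz) hzS
    · rwa [Walk.support_reverse, List.mem_reverse]

/-- Build a walk in the side graph from `x` to `y` through the component of `r`. -/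
lemma side_walk_exists {G : SimpleGraph V} {S : Finset V} {r x y : V}
    (hx : x ∈ S) (hy : y ∈ S) (hxy : x ≠ y)
    {na na' : V} (hna : na ∈ compS G S r) (hna' : na' ∈ compS G S r)
    (hax : G.Adj na x) (hay : G.Adj na' y) :
    Nonempty ((sideGraph G (compS G S r ∪ {x, y}) x y).Walk x y) := by
  set C := compS G S r with hC
  set A : Set V := C ∪ {x, y} with hA
  have hxC : x ∉ C := fun h => compS_not_mem_S h hx
  have hyC : y ∉ C := fun h => compS_not_mem_S h hy
  have hCA : C ⊆ A := Set.subset_union_left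
  have hxA : x ∈ A := Or.inr (by simp)
  have hyA : y ∈ A := Or.inr (by simp)
  obtain ⟨w1, hw1⟩ := id hna
  obtain ⟨w2, hw2⟩ := id hna'
  set wG : G.Walk na na' := w1.reverse.append w2 with hwG
  have hrC : r ∈ C := compS_self (compS_start hna)
  have hsupG : ∀ z ∈ wG.support, z ∈ C := by
    intro z hz
    rw [Walk.mem_support_append_iff] at hz
    rcases hz with hz | hz
    · rw [Walk.support_reverse, List.mem_reverse] at hz
      exact compS_walk_support w1 hrC hw1 z hz
    · exact compS_walk_support w2 hrC hw2 z hz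
  have hT : ∀ e ∈ wG.edges, e ∈ (sideGraph G A x y).edgeSet :=
    walk_transfer_side wG hsupG hCA hxC
  have hxna : (sideGraph G A x y).Adj x na := by
    refine ⟨hax.symm, hxA, hCA hna, fun h => ?_⟩
    rw [Sym2.eq_iff] at h
    rcases h with ⟨-, rfl⟩ | ⟨rfl, -⟩
    · exact hyC hna
    · exact hxy rfl
  have hya' : (sideGraph G A x y).Adj na' y := by
    refine ⟨hay, hCA hna', hyA, fun h => ?_⟩
    rw [Sym2.eq_iff] at h
    rcases h with ⟨rfl, -⟩ | ⟨-, rfl⟩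
    · exact hxC hna'
    · exact hxy rfl
  exact ⟨Walk.cons hxna ((wG.transfer _ hT).append (Walk.cons hya' Walk.nil))⟩

end part2c
section part2d
open SimpleGraph Walk
set_option linter.unusedSectionVars false
variable {V : Type} [Fintype V] [DecidableEq V]

lemma sep_clique {G : SimpleGraph V} (hG : IsChordal' G) {a b : V} {S : Finset V}
    (hS : GSep G S a b) (hmin : ∀ S' : Finset V, GSep G S' a b → S.card ≤ S'.card)
    {x y : V}
    (hx : x ∈ S) (hy : y ∈ S) (hxy : x ≠ y) : G.Adj x y := by
  by_contra hnadj
  set Ca := compS G S a with hCa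
  set Cb := compS G S b with hCb
  have hCab : ∀ u, u ∈ Ca → u ∉ Cb := fun u hua hub =>
    hS.2.2 (compS_trans hua (compS_comm hub))
  obtain ⟨⟨na, hna, hnax⟩, ⟨nb, hnb, hnbx⟩⟩ := sep_nbrs hS hmin hx
  obtain ⟨⟨na', hna', hnay⟩, ⟨nb', hnb', hnby⟩⟩ := sep_nbrs hS hmin hy
  set A : Set V := Ca ∪ {x, y} with hA
  set B : Set V := Cb ∪ {x, y} with hB
  set Ha := sideGraph G A x y with hHa
  set Hb := sideGraph G B x y with hHb
  have hwalka : Nonempty (Ha.Walk x y) := side_walk_exists hx hy hxy hna hna' hnax hnay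
  have hwalkb : Nonempty (Hb.Walk x y) := side_walk_exists hx hy hxy hnb hnb' hnbx hnby
  obtain ⟨pa, hpa_path, hpa_min⟩ := exists_min_path Ha hwalka
  obtain ⟨pb, hpb_path, hpb_min⟩ := exists_min_path Hb hwalkb
  -- lengths at least 2
  have hlena : 2 ≤ pa.length := by
    rcases Nat.lt_or_ge pa.length 2 with h2 | h2
    · interval_cases h : pa.length
      · exact absurd (Walk.eq_of_length_eq_zero h) hxy
      · exact absurd rfl (pa.adj_of_mem_edges (edge_of_length_one pa h)).2.2.2
    · exact h2
  have hlenb : 2 ≤ pb.length := by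
    rcases Nat.lt_or_ge pb.length 2 with h2 | h2
    · interval_cases h : pb.length
      · exact absurd (Walk.eq_of_length_eq_zero h) hxy
      · exact absurd rfl (pb.adj_of_mem_edges (edge_of_length_one pb h)).2.2.2
    · exact h2
  have hsupa : ∀ z ∈ pa.support, z ∈ A := sideGraph_support pa (Or.inr (by simp))
  have hsupb : ∀ z ∈ pb.support, z ∈ B := sideGraph_support pb (Or.inr (by simp))
  have hint : ∀ z, z ∈ pa.support → z ∈ pb.support → z = x ∨ z = y := by
    intro z hza hzb
    rcases hsupa z hza with hzCa | hzxy
    · rcases hsupb z hzb with hzCb | hzxy'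
      · exact absurd hzCb (hCab z hzCa)
      · simpa using hzxy'
    · simpa using hzxy
  have hTa : ∀ e ∈ pa.edges, e ∈ G.edgeSet := side_edges_le pa
  have hTb : ∀ e ∈ pb.edges, e ∈ G.edgeSet := side_edges_le pb
  set pa' : G.Walk x y := pa.transfer G hTa with hpa'
  set pb' : G.Walk x y := pb.transfer G hTb with hpb'
  set c : G.Walk x x := pa'.append pb'.reverse with hc
  have hcedges : c.edges = pa.edges ++ pb.edges.reverse := by
    rw [hc, Walk.edges_append, Walk.edges_reverse, Walk.edges_transfer, Walk.edges_transfer]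
  have hclen : c.length = pa.length + pb.length := by
    rw [hc, Walk.length_append, Walk.length_reverse, Walk.length_transfer,
      Walk.length_transfer]
  have hxpa : x ∈ pa.support := pa.start_mem_support
  have hypa : y ∈ pa.support := pa.end_mem_support
  have hxpb : x ∈ pb.support := pb.start_mem_support
  have hypb : y ∈ pb.support := pb.end_mem_support
  have hno_xy_a : s(x, y) ∉ pa.edges := fun h => (pa.adj_of_mem_edges h).2.2.2 rfl
  have hno_xy_b : s(x, y) ∉ pb.edges := fun h => (pb.adj_of_mem_edges h).2.2.2 rfl
  have hdisj : ∀ e ∈ pa.edges, e ∉ pb.edges := by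
    intro e hea heb
    induction e using Sym2.ind with
    | _ p q =>
      have hp : p = x ∨ p = y := hint p (pa.fst_mem_support_of_mem_edges hea)
        (pb.fst_mem_support_of_mem_edges heb)
      have hq : q = x ∨ q = y := hint q (pa.snd_mem_support_of_mem_edges hea)
        (pb.snd_mem_support_of_mem_edges heb)
      have hpq : p ≠ q := (pa.adj_of_mem_edges hea).1.ne
      rcases hp with rfl | rfl <;> rcases hq with rfl | rfl
      · exact hpq rfl
      · exact hno_xy_a hea
      · exact hno_xy_a (by rwa [Sym2.eq_swap] at hea)
      · exact hpq rfl
  have hnda : pa'.support.Nodup := by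
    rw [hpa', Walk.support_transfer]; exact hpa_path.support_nodup
  have hndb : pb'.reverse.support.Nodup := by
    rw [Walk.support_reverse, List.nodup_reverse, hpb', Walk.support_transfer]
    exact hpb_path.support_nodup
  have hxnotail : x ∉ pa'.support.tail := by
    have := hnda
    rw [Walk.support_eq_cons pa'] at this
    exact (List.nodup_cons.1 this).1
  have hynotail : y ∉ pb'.reverse.support.tail := by
    have := hndb
    rw [Walk.support_eq_cons pb'.reverse] at this
    exact (List.nodup_cons.1 this).1
  have hmema : ∀ z, z ∈ pa'.support ↔ z ∈ pa.support := by
    intro z; rw [hpa', Walk.support_transfer]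
  have hmemb : ∀ z, z ∈ pb'.reverse.support ↔ z ∈ pb.support := by
    intro z; rw [Walk.support_reverse, List.mem_reverse, hpb', Walk.support_transfer]
  have hcycle : c.IsCycle := by
    refine ⟨⟨⟨?_⟩, ?_⟩, ?_⟩
    · rw [hcedges]
      refine List.Nodup.append hpa_path.edges_nodup
        (List.nodup_reverse.2 hpb_path.edges_nodup) ?_
      intro e hea heb
      exact hdisj e hea (List.mem_reverse.1 heb)
    · intro hnil
      have := congrArg Walk.length hnil
      rw [hclen] at this
      simp only [Walk.length_nil] at this
      omega
    · rw [hc, Walk.tail_support_append]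
      refine List.Nodup.append hnda.tail hndb.tail ?_
      intro z hza hzb
      have hza' : z ∈ pa.support := (hmema z).1 (List.mem_of_mem_tail hza)
      have hzb' : z ∈ pb.support := (hmemb z).1 (List.mem_of_mem_tail hzb)
      rcases hint z hza' hzb' with rfl | rfl
      · exact hxnotail hza
      · exact hynotail hzb
  obtain ⟨x0, y0, hadj0, hx0, hy0, hne0⟩ := hG x c hcycle (by omega)
  have hmemc : ∀ z, z ∈ c.support → z ∈ pa.support ∨ z ∈ pb.support := by
    intro z hz
    rw [hc, Walk.mem_support_append_iff] at hz
    rcases hz with hz | hz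
    · exact Or.inl ((hmema z).1 hz)
    · exact Or.inr ((hmemb z).1 hz)
  -- the chord is not the pair (x, y)
  have hnot_xy : s(x0, y0) ≠ s(x, y) := by
    intro h
    rw [Sym2.eq_iff] at h
    rcases h with ⟨rfl, rfl⟩ | ⟨rfl, rfl⟩
    · exact hnadj hadj0
    · exact hnadj hadj0.symm
  -- case: both endpoints in one side path
  have hsidea : ∀ u v, G.Adj u v → s(u, v) ∉ c.edges → s(u, v) ≠ s(x, y) →
      u ∈ pa.support → v ∈ pa.support → False := by
    intro u v huv hch hnxy h1 h2
    have hadjHa : Ha.Adj u v := ⟨huv, hsupa u h1, hsupa v h2, hnxy⟩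
    have := min_walk_no_chord pa hpa_min hadjHa h1 h2
    exact hch (by rw [hcedges]; exact List.mem_append_left _ this)
  have hsideb : ∀ u v, G.Adj u v → s(u, v) ∉ c.edges → s(u, v) ≠ s(x, y) →
      u ∈ pb.support → v ∈ pb.support → False := by
    intro u v huv hch hnxy h1 h2
    have hadjHb : Hb.Adj u v := ⟨huv, hsupb u h1, hsupb v h2, hnxy⟩
    have := min_walk_no_chord pb hpb_min hadjHb h1 h2
    exact hch (by rw [hcedges]; exact List.mem_append_right _ (List.mem_reverse.2 this))
  -- mixed case
  have hmixed : ∀ u v : V, G.Adj u v → s(u, v) ∉ c.edges → s(u, v) ≠ s(x, y) →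
      u ∈ pa.support → u ∉ pb.support → v ∈ pb.support → False := by
    intro u v huv hch hnxy hua hub hvb
    have huCa : u ∈ Ca := by
      rcases hsupa u hua with h | h
      · exact h
      · simp only [Set.mem_insert_iff, Set.mem_singleton_iff] at h
        rcases h with rfl | rfl
        · exact absurd hxpb hub
        · exact absurd hypb hub
    by_cases hvS : v ∈ S
    · -- v ∈ S and v ∈ pb.support means v ∈ {x, y}, but x, y ∈ pa.support too
      rcases hsupb v hvb with h | h
      · exact absurd hvS (compS_not_mem_S h)
      · simp only [Set.mem_insert_iff, Set.mem_singleton_iff] at h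
        rcases h with rfl | rfl
        · exact hsidea u v huv hch hnxy hua hxpa
        · exact hsidea u v huv hch hnxy hua hypa
    · have hvCa : v ∈ Ca := compS_extend huCa huv hvS
      have hvCb : v ∈ Cb := by
        rcases hsupb v hvb with h | h
        · exact h
        · simp only [Set.mem_insert_iff, Set.mem_singleton_iff] at h
          rcases h with rfl | rfl
          · exact absurd hx (compS_not_mem_S hvCa)
          · exact absurd hy (compS_not_mem_S hvCa)
      exact hCab v hvCa hvCb
  have hne0' : s(y0, x0) ∉ c.edges := by rwa [Sym2.eq_swap]
  have hnot_xy' : s(y0, x0) ≠ s(x, y) := by rwa [Sym2.eq_swap]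
  rcases hmemc x0 hx0 with hxa | hxb <;> rcases hmemc y0 hy0 with hya | hyb
  · exact hsidea x0 y0 hadj0 hne0 hnot_xy hxa hya
  · by_cases hx0b : x0 ∈ pb.support
    · exact hsideb x0 y0 hadj0 hne0 hnot_xy hx0b hyb
    · exact hmixed x0 y0 hadj0 hne0 hnot_xy hxa hx0b hyb
  · by_cases hy0b : y0 ∈ pb.support
    · exact hsideb x0 y0 hadj0 hne0 hnot_xy hxb hy0b
    · exact hmixed y0 x0 hadj0.symm hne0' hnot_xy' hya hy0b hxb
  · exact hsideb x0 y0 hadj0 hne0 hnot_xy hxb hyb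

end part2d
section part2e
open SimpleGraph Walk
set_option linter.unusedSectionVars false

theorem dirac_two : ∀ (m : ℕ) (V : Type) [Fintype V] [DecidableEq V] (G : SimpleGraph V),
    Fintype.card V ≤ m → IsChordal' G → ∀ a b : V, a ≠ b → ¬G.Adj a b →
    ∃ s t : V, IsSimplicial G s ∧ IsSimplicial G t ∧ s ≠ t ∧ ¬G.Adj s t := by
  intro m
  induction m with
  | zero =>
    intro V _ _ G hcard _ a b _ _
    have := Fintype.card_pos_iff.2 ⟨a⟩
    omega
  | succ m IH =>
    intro V _ _ G hcard hG a b hne hab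
    classical
    obtain ⟨S0, hS0⟩ := sep_exists hab hne
    obtain ⟨S, hSmem, hSmin⟩ := Finset.exists_min_image
      (Finset.univ.filter (fun S => GSep G S a b)) Finset.card
      ⟨S0, by simp [hS0]⟩
    have hS : GSep G S a b := (Finset.mem_filter.1 hSmem).2
    have hmin : ∀ S' : Finset V, GSep G S' a b → S.card ≤ S'.card := fun S' h =>
      hSmin S' (Finset.mem_filter.2 ⟨Finset.mem_univ _, h⟩)
    have hminswap : ∀ S' : Finset V, GSep G S' b a → S.card ≤ S'.card := fun S' h =>
      hmin S' (sep_symm h)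
    -- key: a simplicial vertex in each component
    have side : ∀ (r r' : V), GSep G S r r' →
        (∀ S' : Finset V, GSep G S' r r' → S.card ≤ S'.card) →
        ∃ s ∈ compS G S r, IsSimplicial G s := by
      intro r r' hSr hminr
      set C := compS G S r with hC
      have hr'nmem : r' ∉ C ∪ ↑S := by
        rintro (h | h)
        · exact hSr.2.2 h
        · exact hSr.2.1 h
      set f : {u : V // u ∈ C ∪ ↑S} ↪ V := Function.Embedding.subtype _ with hf
      set Ga := G.comap f with hGa'
      have hGa : IsChordal' Ga := IsChordal'.comap f hG
      have hcardU : Fintype.card {u : V // u ∈ C ∪ ↑S} ≤ m := by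
        have h2 : Fintype.card {u : V // u ∈ C ∪ ↑S} < Fintype.card V := by
          simpa using Fintype.card_subtype_lt (p := fun u => u ∈ C ∪ ↑S) hr'nmem
        omega
      have hclosed : ∀ u ∈ C, ∀ z, G.Adj u z → z ∈ C ∪ ↑S := by
        intro u hu z hz
        by_cases hzS : z ∈ S
        · exact Or.inr hzS
        · exact Or.inl (compS_extend hu hz hzS)
      have hrC : r ∈ C := compS_self hSr.1
      by_cases hcomp : ∀ p q : {u : V // u ∈ C ∪ ↑S}, p ≠ q → Ga.Adj p q
      · refine ⟨r, hrC, ?_⟩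
        intro p q hp hq hpq
        exact hcomp ⟨p, hclosed r hrC p hp⟩ ⟨q, hclosed r hrC q hq⟩
          (by simp [Subtype.ext_iff, hpq])
      · push_neg at hcomp
        obtain ⟨p, q, hpq, hnadjpq⟩ := hcomp
        obtain ⟨s', t', hs', ht', hst', hnst'⟩ := IH _ Ga hcardU hGa p q hpq hnadjpq
        have hpick : ∃ u : {u : V // u ∈ C ∪ ↑S}, IsSimplicial Ga u ∧ (↑u : V) ∉ S := by
          by_cases h1 : (↑s' : V) ∈ S
          · refine ⟨t', ht', fun h2 => ?_⟩
            exact hnst' (sep_clique hG hSr hminr h1 h2 (fun h => hst' (Subtype.ext h)))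
          · exact ⟨s', hs', h1⟩
        obtain ⟨u, hu_simp, huS⟩ := hpick
        have huC : (↑u : V) ∈ C := by
          rcases u.2 with h | h
          · exact h
          · exact absurd h huS
        refine ⟨↑u, huC, ?_⟩
        intro p' q' hp' hq' hpq'
        have h1 : Ga.Adj ⟨↑u, u.2⟩ ⟨p', hclosed _ huC p' hp'⟩ := hp'
        have h2 : Ga.Adj ⟨↑u, u.2⟩ ⟨q', hclosed _ huC q' hq'⟩ := hq'
        exact hu_simp ⟨p', hclosed _ huC p' hp'⟩ ⟨q', hclosed _ huC q' hq'⟩ h1 h2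
          (by simp [Subtype.ext_iff, hpq'])
    obtain ⟨sa, hsaC, hsa⟩ := side a b hS hmin
    obtain ⟨sb, hsbC, hsb⟩ := side b a (sep_symm hS) hminswap
    have hCab : ∀ u, u ∈ compS G S a → u ∉ compS G S b := fun u hua hub =>
      hS.2.2 (compS_trans hua (compS_comm hub))
    refine ⟨sa, sb, hsa, hsb, ?_, ?_⟩
    · intro h
      exact hCab sa hsaC (h ▸ hsbC)
    · intro hadj
      have hsbS : sb ∉ S := compS_not_mem_S hsbC
      exact hCab sb (compS_extend hsaC hadj hsbS) hsbC

theorem chordal_exists_simplicial {V : Type} [Fintype V] [DecidableEq V] (G : SimpleGraph V)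
    (hG : IsChordal' G) (hne : Nonempty V) : ∃ v, IsSimplicial G v := by
  classical
  by_cases h : ∃ a b : V, a ≠ b ∧ ¬G.Adj a b
  · obtain ⟨a, b, h1, h2⟩ := h
    obtain ⟨s, _, hs, _⟩ := dirac_two (Fintype.card V) V G le_rfl hG a b h1 h2
    exact ⟨s, hs⟩
  · push_neg at h
    exact ⟨hne.some, fun x y _ _ hxy => h x y hxy⟩

end part2e
section part3a
open Matrix

lemma sum_dite_mul_right {α : Type} [Fintype α] (p : α → Prop) [DecidablePred p]
    (f : α → ℝ) (g : (a : α) → p a → ℝ) :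
    ∑ a, f a * (if h : p a then g a h else 0) = ∑ a : Subtype p, f ↑a * g ↑a a.2 := by
  classical
  calc ∑ a, f a * (if h : p a then g a h else 0)
      = (∑ a ∈ Finset.univ.filter p, f a * (if h : p a then g a h else 0))
        + ∑ a ∈ Finset.univ.filter (fun a => ¬ p a), f a * (if h : p a then g a h else 0) :=
        (Finset.sum_filter_add_sum_filter_not _ _ _).symm
    _ = ∑ a ∈ Finset.univ.filter p, f a * (if h : p a then g a h else 0) := by
        have hz : ∑ a ∈ Finset.univ.filter (fun a => ¬ p a),
            f a * (if h : p a then g a h else 0) = 0 :=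
          Finset.sum_eq_zero (fun a ha => by rw [dif_neg (Finset.mem_filter.1 ha).2, mul_zero])
        rw [hz, add_zero]
    _ = ∑ a : Subtype p, f ↑a * (if h : p ↑a then g ↑a h else 0) :=
        Finset.sum_subtype _ (by simp) _
    _ = ∑ a : Subtype p, f ↑a * g ↑a a.2 :=
        Finset.sum_congr rfl (fun a _ => by rw [dif_pos a.2])

lemma sum_dite_mul_left {α : Type} [Fintype α] (p : α → Prop) [DecidablePred p]
    (f : α → ℝ) (g : (a : α) → p a → ℝ) :
    ∑ a, (if h : p a then g a h else 0) * f a = ∑ a : Subtype p, g ↑a a.2 * f ↑a := by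
  have h1 : ∑ a, (if h : p a then g a h else 0) * f a
      = ∑ a, f a * (if h : p a then g a h else 0) :=
    Finset.sum_congr rfl (fun a _ => mul_comm _ _)
  rw [h1, sum_dite_mul_right p f g]
  exact Finset.sum_congr rfl (fun a _ => mul_comm _ _)

lemma exists_max_clique_superset {V : Type} [Fintype V] [DecidableEq V] (G : SimpleGraph V)
    (C : Finset V) (hC : G.IsClique ↑C) :
    ∃ D : Finset V, (G.IsClique (↑D : Set V) ∧ ∀ t : Set V, G.IsClique t → ↑D ⊆ t → ↑D = t)
      ∧ C ⊆ D := by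
  classical
  obtain ⟨D, hDmem, hDmax⟩ := Finset.exists_max_image
    (Finset.univ.filter fun t : Finset V => G.IsClique ↑t ∧ C ⊆ t) Finset.card
    ⟨C, by simp [hC]⟩
  rw [Finset.mem_filter] at hDmem
  obtain ⟨-, hDcl, hCD⟩ := hDmem
  refine ⟨D, ⟨hDcl, ?_⟩, hCD⟩
  intro t ht hsub
  have htfin : t.Finite := Set.toFinite t
  set t' := htfin.toFinset with ht'
  have hct' : (↑t' : Set V) = t := htfin.coe_toFinset
  have ht'mem : t' ∈ Finset.univ.filter fun s : Finset V => G.IsClique ↑s ∧ C ⊆ s := by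
    rw [Finset.mem_filter]
    refine ⟨Finset.mem_univ _, by rw [hct']; exact ht, ?_⟩
    intro c hc
    have : (c : V) ∈ (↑D : Set V) := hCD hc
    have : (c : V) ∈ t := hsub this
    rwa [← hct', Finset.mem_coe] at this
  have hcard : t'.card ≤ D.card := hDmax t' ht'mem
  have hDt' : D ⊆ t' := by
    intro d hd
    have : (d : V) ∈ t := hsub hd
    rwa [← hct', Finset.mem_coe] at this
  have : D = t' := Finset.eq_of_subset_of_card_le hDt' hcard
  rw [this, hct']

end part3a
section part3b
open Matrix

lemma completion_empty {V : Type} [Fintype V] [DecidableEq V] [IsEmpty V]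
    (G : SimpleGraph V) (X : Matrix V V ℝ) :
    ∃ Y : Matrix V V ℝ, Y.PosSemidef ∧ (∀ i, Y i i = X i i) ∧
      ∀ i j, G.Adj i j → Y i j = X i j := by
  refine ⟨X, .of_dotProduct_mulVec_nonneg ?_ ?_, fun i => rfl, fun i j _ => rfl⟩
  · ext i j; exact isEmptyElim i
  · intro x; simp [dotProduct]

theorem psd_completion_general :
    ∀ (m : ℕ) (V : Type) [Fintype V] [DecidableEq V] (G : SimpleGraph V)
      (X : Matrix V V ℝ), Fintype.card V ≤ m → IsChordal' G → X.IsSymm →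
      (∀ C : Finset V, G.IsClique (↑C : Set V) →
        (X.submatrix (fun c : {z // z ∈ C} => (c : V))
          (fun c : {z // z ∈ C} => (c : V))).PosSemidef) →
      ∃ Y : Matrix V V ℝ, Y.PosSemidef ∧ (∀ i, Y i i = X i i) ∧
        ∀ i j, G.Adj i j → Y i j = X i j := by
  intro m
  induction m with
  | zero =>
    intro V _ _ G X hcard hG hsymm hcl
    have : IsEmpty V := by
      rw [← Fintype.card_eq_zero_iff]; omega
    exact completion_empty G X
  | succ m IH =>
    intro V _ _ G X hcard hG hsymm hcl
    classical
    by_cases hne : Nonempty V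
    case neg =>
      have : IsEmpty V := not_nonempty_iff.1 hne
      exact completion_empty G X
    case pos =>
    obtain ⟨v, hv⟩ := chordal_exists_simplicial G hG hne
    set f : {u : V // u ≠ v} ↪ V := Function.Embedding.subtype _ with hf
    set G' := G.comap f with hG'def
    set X' : Matrix {u : V // u ≠ v} {u : V // u ≠ v} ℝ :=
      X.submatrix (fun u => ↑u) (fun u => ↑u) with hX'
    have hG'chordal : IsChordal' G' := IsChordal'.comap f hG
    have hcard' : Fintype.card {u : V // u ≠ v} ≤ m := by
      have h1 : Fintype.card {u : V // u ≠ v} < Fintype.card V :=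
        Fintype.card_subtype_lt (x := v) (by simp)
      omega
    have hsymm' : X'.IsSymm := hsymm.submatrix _
    have hXsym : ∀ i j : V, X j i = X i j := fun i j => by
      have := congrFun (congrFun hsymm i) j
      rwa [Matrix.transpose_apply] at this
    have hcl' : ∀ C : Finset {u : V // u ≠ v}, G'.IsClique (↑C : Set {u : V // u ≠ v}) →
        (X'.submatrix (fun c : {z // z ∈ C} => (c : {u : V // u ≠ v}))
          (fun c : {z // z ∈ C} => (c : {u : V // u ≠ v}))).PosSemidef := by
      intro C hC
      set Cim : Finset V := C.image (fun u : {u : V // u ≠ v} => ↑u) with hCim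
      have hCimcl : G.IsClique (↑Cim : Set V) := by
        intro p hp q hq hpq
        simp only [hCim, Finset.coe_image, Set.mem_image, Finset.mem_coe] at hp hq
        obtain ⟨p', hp', rfl⟩ := hp
        obtain ⟨q', hq', rfl⟩ := hq
        have hne' : p' ≠ q' := fun h => hpq (by rw [h])
        exact hC hp' hq' hne'
      have hbig := hcl Cim hCimcl
      have hpsd := hbig.submatrix
        (fun c : {z // z ∈ C} => (⟨↑↑c, Finset.mem_image_of_mem _ c.2⟩ : {z // z ∈ Cim}))
      rw [Matrix.submatrix_submatrix] at hpsd
      exact hpsd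
    obtain ⟨A, hA, hAdiag, hAedge⟩ := IH {u : V // u ≠ v} G' X' hcard' hG'chordal hsymm' hcl'
    set fK : Option {i : {u : V // u ≠ v} // G.Adj v ↑i} → V :=
      fun o => Option.elim o v (fun i => ↑↑i) with hfK
    set K : Finset V := insert v (Finset.univ.image
      (fun i : {i : {u : V // u ≠ v} // G.Adj v ↑i} => (↑↑i : V))) with hK
    have hfKK : ∀ o, fK o ∈ K := by
      intro o
      cases o with
      | none => exact Finset.mem_insert_self _ _
      | some i =>
        exact Finset.mem_insert_of_mem (Finset.mem_image_of_mem _ (Finset.mem_univ _))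
    have hKmem : ∀ p : V, p ∈ (↑K : Set V) → p = v ∨ G.Adj v p := by
      intro p hp
      simp only [hK, Finset.coe_insert, Set.mem_insert_iff, Finset.coe_image,
        Set.mem_image, Finset.mem_coe, Finset.mem_univ] at hp
      rcases hp with rfl | ⟨i, -, rfl⟩
      · exact Or.inl rfl
      · exact Or.inr i.2
    have hKcl : G.IsClique (↑K : Set V) := by
      intro p hp q hq hpq
      rcases hKmem p hp with rfl | hpadj
      · rcases hKmem q hq with rfl | hqadj
        · exact absurd rfl hpq
        · exact hqadj
      · rcases hKmem q hq with rfl | hqadj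
        · exact hpadj.symm
        · exact hv p q hpadj hqadj hpq
    set W := X.submatrix fK fK with hW
    have hWpsd : W.PosSemidef := by
      have hbig := hcl K hKcl
      have hpsd := hbig.submatrix (fun o => (⟨fK o, hfKK o⟩ : {z // z ∈ K}))
      rw [Matrix.submatrix_submatrix] at hpsd
      exact hpsd
    have hMpsd := bordered_block_psd W hWpsd
    obtain ⟨z, hz⟩ := psd_exists_mulVec _ hMpsd (fun i => W none (some i))
      (fun x hx => bordered_ker W hWpsd x hx)
    have hdle : z ⬝ᵥ (fun i => W none (some i)) ≤ W none none := bordered_le W hWpsd z hz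
    set zt : {u : V // u ≠ v} → ℝ :=
      fun i => if h : G.Adj v ↑i then z ⟨i, h⟩ else 0 with hzt
    have hAM : ∀ i j : {i : {u : V // u ≠ v} // G.Adj v ↑i},
        A ↑i ↑j = W (some i) (some j) := by
      intro i j
      by_cases hij : i = j
      · subst hij
        exact hAdiag ↑i
      · have hne2 : (↑↑i : V) ≠ ↑↑j := by
          intro h
          exact hij (Subtype.ext (Subtype.ext h))
        have hadj : G.Adj ↑↑i ↑↑j := hv _ _ i.2 j.2 hne2
        exact hAedge ↑i ↑j hadj
    have hAz : ∀ i : {i : {u : V // u ≠ v} // G.Adj v ↑i}, (A *ᵥ zt) ↑i = X v ↑↑i := by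
      intro i
      have h1 : (A *ᵥ zt) ↑i = ∑ j : {u : V // u ≠ v}, A ↑i j * zt j := rfl
      have h2 : ∑ j : {u : V // u ≠ v}, A ↑i j * zt j
          = ∑ j : {j : {u : V // u ≠ v} // G.Adj v ↑j}, A ↑i ↑j * z j :=
        sum_dite_mul_right (fun j : {u : V // u ≠ v} => G.Adj v ↑j)
          (fun j => A ↑i j) (fun j h => z ⟨j, h⟩)
      have h3 : ∑ j : {j : {u : V // u ≠ v} // G.Adj v ↑j}, A ↑i ↑j * z j
          = ∑ j : {j : {u : V // u ≠ v} // G.Adj v ↑j}, W (some i) (some j) * z j :=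
        Finset.sum_congr rfl (fun j _ => by rw [hAM i j])
      have h4 : ∑ j : {j : {u : V // u ≠ v} // G.Adj v ↑j}, W (some i) (some j) * z j
          = W none (some i) := congrFun hz i
      rw [h1, h2, h3, h4]
      rfl
    have hzc : zt ⬝ᵥ (A *ᵥ zt) ≤ X v v := by
      have h1 : zt ⬝ᵥ (A *ᵥ zt) = ∑ i : {u : V // u ≠ v}, zt i * (A *ᵥ zt) i := rfl
      have h2 : ∑ i : {u : V // u ≠ v}, zt i * (A *ᵥ zt) i
          = ∑ i : {i : {u : V // u ≠ v} // G.Adj v ↑i}, z i * (A *ᵥ zt) ↑i :=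
        sum_dite_mul_left (fun i : {u : V // u ≠ v} => G.Adj v ↑i)
          (fun i => (A *ᵥ zt) i) (fun i h => z ⟨i, h⟩)
      have h3 : ∑ i : {i : {u : V // u ≠ v} // G.Adj v ↑i}, z i * (A *ᵥ zt) ↑i
          = ∑ i : {i : {u : V // u ≠ v} // G.Adj v ↑i}, z i * W none (some i) :=
        Finset.sum_congr rfl (fun i _ => by rw [hAz i]; rfl)
      have h4 : (∑ i : {i : {u : V // u ≠ v} // G.Adj v ↑i}, z i * W none (some i))
          = z ⬝ᵥ (fun i => W none (some i)) := rfl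
      have h5 : W none none = X v v := rfl
      rw [h1, h2, h3, h4, ← h5]
      exact hdle
    have hYopt := border_completion A hA zt (X v v) hzc
    set Y : Matrix V V ℝ := (borderMat A zt (X v v)).submatrix
      (fun u => (Equiv.optionSubtypeNe v).symm u) (fun u => (Equiv.optionSubtypeNe v).symm u)
      with hY
    have hYpsd : Y.PosSemidef := hYopt.submatrix _
    refine ⟨Y, hYpsd, ?_, ?_⟩
    · intro i
      by_cases hiv : i = v
      · subst hiv
        have h1 : Y i i = borderMat A zt (X i i) none none := by
          rw [hY, Matrix.submatrix_apply, Equiv.optionSubtypeNe_symm_self]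
        rw [h1, borderMat_none_none]
      · have hsome : (Equiv.optionSubtypeNe v).symm i = some ⟨i, hiv⟩ :=
          Equiv.optionSubtypeNe_symm_of_ne hiv
        have h1 : Y i i = borderMat A zt (X v v) (some ⟨i, hiv⟩) (some ⟨i, hiv⟩) := by
          rw [hY, Matrix.submatrix_apply, hsome]
        rw [h1, borderMat_some_some]
        exact hAdiag ⟨i, hiv⟩
    · intro i j hadj
      by_cases hiv : i = v
      · subst hiv
        have hjv : j ≠ i := fun h => by subst h; exact G.loopless.irrefl _ hadj
        have h1 : Y i j = borderMat A zt (X i i) none (some ⟨j, hjv⟩) := by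
          rw [hY, Matrix.submatrix_apply, Equiv.optionSubtypeNe_symm_self,
            Equiv.optionSubtypeNe_symm_of_ne hjv]
        rw [h1, borderMat_none_some]
        exact hAz ⟨⟨j, hjv⟩, hadj⟩
      · by_cases hjv : j = v
        · subst hjv
          have h1 : Y i j = borderMat A zt (X j j) (some ⟨i, hiv⟩) none := by
            rw [hY, Matrix.submatrix_apply, Equiv.optionSubtypeNe_symm_self,
              Equiv.optionSubtypeNe_symm_of_ne hiv]
          rw [h1, borderMat_some_none]
          have h2 : (A *ᵥ zt) ⟨i, hiv⟩ = X j i := hAz ⟨⟨i, hiv⟩, hadj.symm⟩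
          rw [h2]
          exact hXsym i j
        · have h1 : Y i j = A ⟨i, hiv⟩ ⟨j, hjv⟩ := by
            rw [hY, Matrix.submatrix_apply, Equiv.optionSubtypeNe_symm_of_ne hiv,
              Equiv.optionSubtypeNe_symm_of_ne hjv, borderMat_some_some]
          rw [h1]
          exact hAedge ⟨i, hiv⟩ ⟨j, hjv⟩ hadj

end part3b

/-- Grone's theorem: for a chordal graph `G`, a partial symmetric matrix `X` with
sparsity pattern `G` admits a PSD completion iff every principal submatrix indexed by a
maximal clique of `G` is PSD. -/
theorem grone {n : ℕ} (G : SimpleGraph (Fin n)) (hG : IsChordal G)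
    (X : Matrix (Fin n) (Fin n) ℝ) (hsymm : X.IsSymm) :
    HasPSDCompletion G X ↔
      ∀ C : Finset (Fin n), IsMaxClique G (C : Set (Fin n)) →
        (X.submatrix (fun c : {x // x ∈ C} => (c : Fin n))
          (fun c : {x // x ∈ C} => (c : Fin n))).PosSemidef := by
  constructor
  · rintro ⟨Y, hY, hdiag, hedge⟩ C hC
    have hXY : X.submatrix (fun c : {x // x ∈ C} => (c : Fin n))
          (fun c : {x // x ∈ C} => (c : Fin n))
        = Y.submatrix (fun c : {x // x ∈ C} => (c : Fin n))
          (fun c : {x // x ∈ C} => (c : Fin n)) := by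
      ext i j
      simp only [Matrix.submatrix_apply]
      by_cases hij : (↑i : Fin n) = ↑j
      · have hij' : i = j := Subtype.ext hij
        subst hij'
        exact (hdiag ↑i).symm
      · have hadj : G.Adj ↑i ↑j :=
          hC.1 (Finset.mem_coe.mpr i.2) (Finset.mem_coe.mpr j.2) hij
        exact (hedge ↑i ↑j hadj).symm
    rw [hXY]
    exact hY.submatrix _
  · intro h
    have hG' : IsChordal' G := hG
    have hcl : ∀ C : Finset (Fin n), G.IsClique (↑C : Set (Fin n)) →
        (X.submatrix (fun c : {z // z ∈ C} => (c : Fin n))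
          (fun c : {z // z ∈ C} => (c : Fin n))).PosSemidef := by
      intro C hC
      obtain ⟨D, hD, hCD⟩ := exists_max_clique_superset G C hC
      have hpsd := h D ⟨hD.1, hD.2⟩
      have hsub := hpsd.submatrix
        (fun c : {z // z ∈ C} => (⟨↑c, hCD c.2⟩ : {z // z ∈ D}))
      rw [Matrix.submatrix_submatrix] at hsub
      exact hsub
    obtain ⟨Y, h1, h2, h3⟩ := psd_completion_general n (Fin n) G X
      (by simp) hG' hsymm hcl
    exact ⟨Y, h1, h2, h3⟩
end

section
/- Minimum rank PSD completion (Dancis): If a partial symmetric matrix X with chordal sparsity pattern E admits a PSD completion, then it admits a PSD completion whose rank equals the maximum over all maximal cliques C_k of rank(X[C_k,C_k]). -/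
open Matrix Finset Submodule
open scoped InnerProductSpace

noncomputable section

lemma sum_dite_lt {M : Type*} [AddCommMonoid M] {d r : ℕ} (h : d ≤ r) (F : Fin d → M) :
    (∑ k : Fin r, if hk : (k : ℕ) < d then F ⟨k, hk⟩ else 0) = ∑ j : Fin d, F j := by
  rw [Finset.sum_dite, Finset.sum_const_zero, add_zero]
  refine Finset.sum_bij (fun x _ => (⟨x.1, (Finset.mem_filter.mp x.2).2⟩ : Fin d)) ?_ ?_ ?_ ?_
  · intro a _; exact Finset.mem_univ _
  · intro a _ b _ hab
    have h2 := congrArg Fin.val hab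
    simp only [Fin.val_mk] at h2
    exact Subtype.ext (Fin.ext h2)
  · intro b _
    refine ⟨⟨⟨(b : ℕ), lt_of_lt_of_le b.2 h⟩, by simp [b.2]⟩, Finset.mem_attach _ _, by simp⟩
  · intro a _; rfl

section Glue

variable {r : ℕ} {ι : Type*} [Fintype ι]

/-- The linear map sending coefficients to the corresponding linear combination. -/
def combo (u : ι → EuclideanSpace ℝ (Fin r)) : (ι → ℝ) →ₗ[ℝ] EuclideanSpace ℝ (Fin r) where
  toFun c := ∑ i, c i • u i
  map_add' c d := by simp [add_smul, Finset.sum_add_distrib]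
  map_smul' a c := by simp [smul_smul, Finset.smul_sum]

lemma inner_combo (u w : ι → EuclideanSpace ℝ (Fin r)) (c d : ι → ℝ) :
    ⟪combo u c, combo w d⟫_ℝ = ∑ i, ∑ j, c i * d j * ⟪u i, w j⟫_ℝ := by
  simp only [combo, LinearMap.coe_mk, AddHom.coe_mk, sum_inner, inner_sum,
    real_inner_smul_left, real_inner_smul_right]
  rw [Finset.sum_comm]
  exact Finset.sum_congr rfl fun i _ => Finset.sum_congr rfl fun j _ => by ring

lemma norm_combo_eq (u w : ι → EuclideanSpace ℝ (Fin r))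
    (h : ∀ i j, ⟪u i, u j⟫_ℝ = ⟪w i, w j⟫_ℝ) (c : ι → ℝ) :
    ‖combo u c‖ = ‖combo w c‖ := by
  have h2 : ⟪combo u c, combo u c⟫_ℝ = ⟪combo w c, combo w c⟫_ℝ := by
    rw [inner_combo, inner_combo]
    exact Finset.sum_congr rfl fun i _ => Finset.sum_congr rfl fun j _ => by rw [h]
  rw [real_inner_self_eq_norm_sq, real_inner_self_eq_norm_sq] at h2
  rcases sq_eq_sq_iff_eq_or_eq_neg.mp h2 with h3 | h3
  · exact h3
  · have := norm_nonneg (combo u c)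
    have := norm_nonneg (combo w c)
    nlinarith

lemma gram_glue (u w : ι → EuclideanSpace ℝ (Fin r))
    (h : ∀ i j, ⟪u i, u j⟫_ℝ = ⟪w i, w j⟫_ℝ) :
    ∃ Q : EuclideanSpace ℝ (Fin r) →ₗᵢ[ℝ] EuclideanSpace ℝ (Fin r), ∀ i, Q (u i) = w i := by
  classical
  set φu := combo u with hφu
  set φw := combo w with hφw
  have hker : LinearMap.ker φu ≤ LinearMap.ker φw := by
    intro c hc
    rw [LinearMap.mem_ker] at hc ⊢
    have h1 := norm_combo_eq u w h c
    have h0 : ‖φw c‖ = 0 := by rw [← h1, hc, norm_zero]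
    exact norm_eq_zero.mp h0
  set e := φu.quotKerEquivRange with he
  set ψ := Submodule.liftQ (LinearMap.ker φu) φw hker with hψ
  set T := ψ.comp (e.symm : _ ≃ₗ[ℝ] _).toLinearMap with hT
  have hTc : ∀ c : ι → ℝ, T ⟨φu c, LinearMap.mem_range_self _ c⟩ = φw c := by
    intro c
    have h1 : e (Submodule.Quotient.mk c) = ⟨φu c, LinearMap.mem_range_self _ c⟩ :=
      Subtype.ext (φu.quotKerEquivRange_apply_mk c)
    have h2 : e.symm ⟨φu c, LinearMap.mem_range_self _ c⟩ = Submodule.Quotient.mk c := by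
      rw [← h1, LinearEquiv.symm_apply_apply]
    simp [hT, h2, hψ]
  have hnorm : ∀ x : LinearMap.range φu, ‖T x‖ = ‖x‖ := by
    rintro ⟨x, hx⟩
    obtain ⟨c, rfl⟩ := hx
    rw [hTc c]
    have : ‖(⟨φu c, LinearMap.mem_range_self _ c⟩ : LinearMap.range φu)‖ = ‖φu c‖ := rfl
    rw [this, norm_combo_eq u w h]
  set L : LinearMap.range φu →ₗᵢ[ℝ] EuclideanSpace ℝ (Fin r) := ⟨T, hnorm⟩ with hL
  refine ⟨L.extend, fun i => ?_⟩
  have hui : φu (Pi.single i 1) = u i := by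
    simp [hφu, combo, Pi.single_apply]
  have hwi : φw (Pi.single i 1) = w i := by
    simp [hφw, combo, Pi.single_apply]
  have hmem : u i ∈ LinearMap.range φu := ⟨Pi.single i 1, hui⟩
  have : L.extend (u i) = L ⟨u i, hmem⟩ := L.extend_apply ⟨u i, hmem⟩
  rw [this]
  have : L ⟨u i, hmem⟩ = T ⟨u i, hmem⟩ := rfl
  rw [this]
  have h3 : (⟨u i, hmem⟩ : LinearMap.range φu) = ⟨φu (Pi.single i 1), LinearMap.mem_range_self _ _⟩ :=
    Subtype.ext hui.symm
  rw [h3, hTc, hwi]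

end Glue

section PsdGram

lemma psd_gram {m : Type*} [Fintype m] [DecidableEq m] (M : Matrix m m ℝ) (hM : M.PosSemidef)
    {r : ℕ} (hr : M.rank ≤ r) :
    ∃ g : m → EuclideanSpace ℝ (Fin r), ∀ i j, ⟪g i, g j⟫_ℝ = M i j := by
  classical
  obtain ⟨B, hB⟩ : ∃ B : Matrix m m ℝ, M = Bᴴ * B := by
    open scoped MatrixOrder in
    obtain ⟨B, hB⟩ := CStarAlgebra.nonneg_iff_eq_star_mul_self.mp hM.nonneg
    exact ⟨B, hB⟩
  set eL : (m → ℝ) ≃ₗ[ℝ] EuclideanSpace ℝ m := (WithLp.linearEquiv 2 ℝ (m → ℝ)).symm with heL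
  set cols : m → EuclideanSpace ℝ m := fun j => eL (Bᵀ j) with hcols
  have hcols_apply : ∀ j i, cols j i = B i j := by
    intro j i
    simp [hcols, heL, WithLp.linearEquiv_symm_apply, WithLp.equiv_symm_apply, PiLp.toLp_apply, Matrix.transpose_apply]
  have hgram : ∀ i j, ⟪cols i, cols j⟫_ℝ = M i j := by
    intro i j
    rw [hB]
    rw [PiLp.inner_apply]
    simp [hcols_apply, Matrix.mul_apply, Matrix.conjTranspose_apply]
    exact Finset.sum_congr rfl fun _ _ => mul_comm _ _
  set W := Submodule.span ℝ (Set.range cols) with hW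
  have hd : Module.finrank ℝ W ≤ r := by
    have h1 : W = Submodule.map (eL : (m → ℝ) →ₗ[ℝ] EuclideanSpace ℝ m)
        (Submodule.span ℝ (Set.range Bᵀ)) := by
      rw [Submodule.map_span]
      congr 1
      exact congrArg (Submodule.span ℝ)
        (Set.range_comp (⇑(eL : (m → ℝ) →ₗ[ℝ] EuclideanSpace ℝ m)) (Bᵀ : m → m → ℝ))
    rw [h1, LinearEquiv.finrank_map_eq, show Set.range Bᵀ = Set.range B.col from rfl,
      ← Matrix.rank_eq_finrank_span_cols]
    have h2 : B.rank = M.rank := by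
      rw [hB, Matrix.rank_conjTranspose_mul_self]
    rw [h2]; exact hr
  set d := Module.finrank ℝ W with hdd
  set b := stdOrthonormalBasis ℝ ↥W with hb
  have hmem : ∀ i, cols i ∈ W := fun i => Submodule.subset_span ⟨i, rfl⟩
  set x : m → W := fun i => ⟨cols i, hmem i⟩ with hx
  refine ⟨fun i => (WithLp.equiv 2 (Fin r → ℝ)).symm
      (fun k => if hk : (k : ℕ) < d then ⟪b ⟨k, hk⟩, x i⟫_ℝ else 0), fun i j => ?_⟩
  rw [PiLp.inner_apply]
  simp only [WithLp.equiv_symm_apply, PiLp.toLp_apply, RCLike.inner_apply, starRingEnd_apply, star_trivial]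
  have hsummand : ∀ k : Fin r,
      (if hk : (k : ℕ) < d then ⟪b ⟨k, hk⟩, x i⟫_ℝ else 0) *
        (if hk : (k : ℕ) < d then ⟪b ⟨k, hk⟩, x j⟫_ℝ else 0)
      = if hk : (k : ℕ) < d then ⟪b ⟨k, hk⟩, x i⟫_ℝ * ⟪b ⟨k, hk⟩, x j⟫_ℝ else 0 := by
    intro k; split <;> simp
  conv_lhs => arg 2; ext k; rw [mul_comm]
  rw [Finset.sum_congr rfl fun k _ => hsummand k,
    sum_dite_lt hd (fun kk : Fin d => ⟪b kk, x i⟫_ℝ * ⟪b kk, x j⟫_ℝ)]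
  have hpars : ∑ kk : Fin d, ⟪b kk, x i⟫_ℝ * ⟪b kk, x j⟫_ℝ = ⟪x i, x j⟫_ℝ := by
    rw [← OrthonormalBasis.sum_inner_mul_inner b (x i) (x j)]
    exact Finset.sum_congr rfl fun kk _ => by rw [real_inner_comm (b kk) (x i)]
  rw [hpars]
  have : ⟪x i, x j⟫_ℝ = ⟪cols i, cols j⟫_ℝ := rfl
  rw [this, hgram]

end PsdGram

open SimpleGraph Walk

section Graph

variable {V : Type*} [DecidableEq V] {G : SimpleGraph V}

lemma IsChordal.induce (hG : IsChordal G) (s : Set V) : IsChordal (G.induce s) := by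
  intro v w hw hlen
  set f : G.induce s ↪g G := SimpleGraph.Embedding.induce s
  have hc : (w.map f.toHom).IsCycle := hw.map f.injective
  obtain ⟨x, y, hadj, hx, hy, hne⟩ := hG _ (w.map f.toHom) hc
    (by rwa [SimpleGraph.Walk.length_map])
  rw [SimpleGraph.Walk.support_map] at hx hy
  obtain ⟨x', hx', rfl⟩ := List.mem_map.mp hx
  obtain ⟨y', hy', rfl⟩ := List.mem_map.mp hy
  refine ⟨x', y', ?_, hx', hy', ?_⟩
  · exact hadj
  · intro hmem
    refine hne ?_
    rw [SimpleGraph.Walk.edges_map]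
    exact List.mem_map_of_mem hmem

lemma shortcut : ∀ {x y : V} (p : G.Walk x y) {u v : V}, G.Adj u v → u ∈ p.support →
    v ∈ p.support → s(u, v) ∉ p.edges →
    ∃ q : G.Walk x y, q.length < p.length ∧ ∀ z ∈ q.support, z ∈ p.support := by
  intro x y p
  induction p with
  | nil =>
    intro u v huv hu hv _
    rw [Walk.support_nil, List.mem_singleton] at hu hv
    exact absurd (hu ▸ hv ▸ huv) (G.loopless.irrefl _)
  | @cons x x₁ y h p' ih =>
    intro u v huv hu hv hne
    rw [Walk.support_cons, List.mem_cons] at hu hv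
    by_cases hux : u = x
    · subst hux
      have hv' : v ∈ p'.support := by
        rcases hv with rfl | hv'
        · exact absurd huv (G.loopless.irrefl _)
        · exact hv'
      by_cases hvx1 : v = x₁
      · subst hvx1
        exact absurd (by rw [Walk.edges_cons]; exact List.mem_cons_self) hne
      · refine ⟨Walk.cons huv (p'.dropUntil v hv'), ?_, ?_⟩
        · have hspec := p'.take_spec hv'
          have hlen : (p'.takeUntil v hv').length + (p'.dropUntil v hv').length = p'.length := by
            rw [← Walk.length_append, hspec]
          have hpos : 0 < (p'.takeUntil v hv').length := by
            rcases Nat.eq_zero_or_pos (p'.takeUntil v hv').length with h0 | h0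
            · exact absurd (Walk.eq_of_length_eq_zero h0).symm hvx1
            · exact h0
          simp only [Walk.length_cons]
          omega
        · intro z hz
          rw [Walk.support_cons, List.mem_cons] at hz
          rcases hz with rfl | hz
          · rw [Walk.support_cons]; exact List.mem_cons_self
          · rw [Walk.support_cons]
            exact List.mem_cons_of_mem _ (p'.support_dropUntil_subset hv' hz)
    · by_cases hvx : v = x
      · subst hvx
        have hu' : u ∈ p'.support := by
          rcases hu with rfl | hu'
          · exact absurd rfl hux
          · exact hu'
        by_cases hux1 : u = x₁
        · subst hux1
          refine absurd ?_ hne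
          rw [Walk.edges_cons]
          have : s(u, v) = s(v, u) := Sym2.eq_swap
          rw [this]
          exact List.mem_cons_self
        · refine ⟨Walk.cons huv.symm (p'.dropUntil u hu'), ?_, ?_⟩
          · have hspec := p'.take_spec hu'
            have hlen : (p'.takeUntil u hu').length + (p'.dropUntil u hu').length = p'.length := by
              rw [← Walk.length_append, hspec]
            have hpos : 0 < (p'.takeUntil u hu').length := by
              rcases Nat.eq_zero_or_pos (p'.takeUntil u hu').length with h0 | h0
              · exact absurd (Walk.eq_of_length_eq_zero h0).symm hux1
              · exact h0
            simp only [Walk.length_cons]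
            omega
          · intro z hz
            rw [Walk.support_cons, List.mem_cons] at hz
            rcases hz with rfl | hz
            · rw [Walk.support_cons]; exact List.mem_cons_self
            · rw [Walk.support_cons]
              exact List.mem_cons_of_mem _ (p'.support_dropUntil_subset hu' hz)
      · have hu' : u ∈ p'.support := by
          rcases hu with rfl | hu'
          · exact absurd rfl hux
          · exact hu'
        have hv' : v ∈ p'.support := by
          rcases hv with rfl | hv'
          · exact absurd rfl hvx
          · exact hv'
        have hne' : s(u, v) ∉ p'.edges := fun hmem =>
          hne (by rw [Walk.edges_cons]; exact List.mem_cons_of_mem _ hmem)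
        obtain ⟨q', hq'len, hq'sup⟩ := ih huv hu' hv' hne'
        refine ⟨Walk.cons h q', ?_, ?_⟩
        · simp only [Walk.length_cons]; omega
        · intro z hz
          rw [Walk.support_cons, List.mem_cons] at hz
          rcases hz with rfl | hz
          · rw [Walk.support_cons]; exact List.mem_cons_self
          · rw [Walk.support_cons]; exact List.mem_cons_of_mem _ (hq'sup z hz)

end Graph

section Sep

variable {V : Type*} [DecidableEq V]

/-- `S` separates `a` from `b`: every walk from `a` to `b` meets `S`. -/
def SepSet (G : SimpleGraph V) (a b : V) (S : Finset V) : Prop :=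
  a ∉ S ∧ b ∉ S ∧ ∀ w : G.Walk a b, ∃ x ∈ w.support, x ∈ S

/-- The set of vertices reachable from `a` by walks avoiding `S`. -/
def compSet (G : SimpleGraph V) (S : Finset V) (a : V) : Set V :=
  {x | x ∉ S ∧ ∃ w : G.Walk a x, ∀ z ∈ w.support, z ∉ S}

variable {G : SimpleGraph V}

lemma sepSet_symm {a b : V} {S : Finset V} (h : SepSet G a b S) : SepSet G b a S := by
  refine ⟨h.2.1, h.1, fun w => ?_⟩
  obtain ⟨x, hx, hxS⟩ := h.2.2 w.reverse
  rw [Walk.support_reverse, List.mem_reverse] at hx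
  exact ⟨x, hx, hxS⟩

lemma mem_compSet_of_walk {a x : V} {S : Finset V} (w : G.Walk a x)
    (hw : ∀ z ∈ w.support, z ∉ S) : ∀ z ∈ w.support, z ∈ compSet G S a := by
  intro z hz
  exact ⟨hw z hz, w.takeUntil z hz, fun y hy => hw y (w.support_takeUntil_subset hz hy)⟩

lemma self_mem_compSet {a : V} {S : Finset V} (ha : a ∉ S) : a ∈ compSet G S a :=
  ⟨ha, Walk.nil, by simpa using ha⟩

lemma compSet_adj_closed {a x z : V} {S : Finset V} (hx : x ∈ compSet G S a)
    (hz : z ∉ S) (hadj : G.Adj x z) : z ∈ compSet G S a := by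
  obtain ⟨hxS, w, hw⟩ := hx
  refine ⟨hz, w.concat hadj, fun y hy => ?_⟩
  rw [Walk.support_concat, List.mem_append, List.mem_singleton] at hy
  rcases hy with hy | rfl
  · exact hw y hy
  · exact hz

/-- No vertex is in both components, and no edge crosses between them. -/
lemma sep_disjoint {a b : V} {S : Finset V} (hsep : SepSet G a b S) :
    ∀ x ∈ compSet G S a, ∀ y ∈ compSet G S b, x ≠ y ∧ ¬G.Adj x y := by
  intro x hx y hy
  obtain ⟨hxS, wx, hwx⟩ := hx
  obtain ⟨hyS, wy, hwy⟩ := hy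
  constructor
  · rintro rfl
    obtain ⟨z, hz, hzS⟩ := hsep.2.2 (wx.append wy.reverse)
    rw [Walk.support_append, List.mem_append] at hz
    rcases hz with hz | hz
    · exact hwx z hz hzS
    · have h1 : z ∈ wy.reverse.support := List.mem_of_mem_tail hz
      rw [Walk.support_reverse, List.mem_reverse] at h1
      exact hwy z h1 hzS
  · intro hadj
    obtain ⟨z, hz, hzS⟩ := hsep.2.2 ((wx.concat hadj).append wy.reverse)
    rw [Walk.support_append, List.mem_append] at hz
    rcases hz with hz | hz
    · rw [Walk.support_concat, List.mem_append,
        List.mem_singleton] at hz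
      rcases hz with hz | hz
      · exact hwx z hz hzS
      · exact hwy z (by rw [hz]; exact wy.end_mem_support) hzS
    · have h1 : z ∈ wy.reverse.support := List.mem_of_mem_tail hz
      rw [Walk.support_reverse, List.mem_reverse] at h1
      exact hwy z h1 hzS

/-- If `S` separates but `S.erase s` does not, then `s` has a neighbour in the
`a`-component. -/
lemma sep_erase_neighbor {a b s : V} {S : Finset V} (hsep : SepSet G a b S) (hs : s ∈ S)
    (hns : ¬SepSet G a b (S.erase s)) :
    ∃ x ∈ compSet G S a, G.Adj x s := by
  have haS : a ∉ S.erase s := fun h => hsep.1 (Finset.mem_of_mem_erase h)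
  have hbS : b ∉ S.erase s := fun h => hsep.2.1 (Finset.mem_of_mem_erase h)
  rw [SepSet] at hns
  push_neg at hns
  obtain ⟨w, hw⟩ := hns haS hbS
  have hhit : ∀ z ∈ w.support, z ∈ S → z = s := by
    intro z hz hzS
    by_contra hzs
    exact hw z hz (Finset.mem_erase.mpr ⟨hzs, hzS⟩)
  obtain ⟨z, hz0, hzS0⟩ := hsep.2.2 w
  have hz : s ∈ w.support := (hhit z hz0 hzS0) ▸ hz0
  have hsa : a ≠ s := fun h => hsep.1 (h ▸ hs)
  have hcount : (w.takeUntil s hz).support.count s = 1 :=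
    w.count_support_takeUntil_eq_one hz
  have hnn : ¬(w.takeUntil s hz).reverse.Nil := by
    rw [Walk.nil_iff_length_eq, Walk.length_reverse]
    intro h0
    exact hsa (Walk.eq_of_length_eq_zero h0)
  obtain ⟨x, hadj, q, hr⟩ := Walk.not_nil_iff.mp hnn
  refine ⟨x, ?_, hadj.symm⟩
  have hqsup : ∀ y ∈ q.support, y ∈ (w.takeUntil s hz).support ∧ y ≠ s := by
    intro y hy
    have h1 : y ∈ (w.takeUntil s hz).reverse.support := by
      rw [hr, Walk.support_cons]
      exact List.mem_cons_of_mem _ hy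
    rw [Walk.support_reverse, List.mem_reverse] at h1
    refine ⟨h1, fun hyz => ?_⟩
    subst hyz
    have h2 : (w.takeUntil y hz).reverse.support = y :: q.support := by
      rw [hr, Walk.support_cons]
    have h3 : (w.takeUntil y hz).reverse.support.count y
        = (w.takeUntil y hz).support.count y := by
      rw [Walk.support_reverse, List.count_reverse]
    rw [h2, List.count_cons_self] at h3
    have h5 : 0 < q.support.count y := List.count_pos_iff.mpr hy
    omega
  have hqav : ∀ y ∈ q.support, y ∉ S := by
    intro y hy hyS
    obtain ⟨hyw1, hyz⟩ := hqsup y hy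
    exact hyz (hhit y (w.support_takeUntil_subset hz hyw1) hyS)
  exact mem_compSet_of_walk q.reverse
    (fun y hy => hqav y (by rwa [Walk.support_reverse, List.mem_reverse] at hy))
    x (by simp)

end Sep

section MinSep

variable {V : Type*} [DecidableEq V] {G : SimpleGraph V}

lemma two_le_length_of_not_adj {x y : V} (hxy : x ≠ y) (hnadj : ¬G.Adj x y)
    (p : G.Walk x y) : 2 ≤ p.length := by
  rcases Nat.lt_or_ge p.length 2 with h | h
  · interval_cases hl : p.length
    · exact absurd (Walk.eq_of_length_eq_zero hl) hxy
    · exact absurd (Walk.adj_of_length_eq_one hl) hnadj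
  · exact h

lemma minimal_sep_clique (hG : IsChordal G) {a b : V} {S : Finset V}
    (hsep : SepSet G a b S)
    (hmin : ∀ S' : Finset V, SepSet G a b S' → S.card ≤ S'.card) :
    ∀ x ∈ S, ∀ y ∈ S, x ≠ y → G.Adj x y := by
  classical
  intro x hxS y hyS hxy
  by_contra hnadj
  have hnbr : ∀ s ∈ S, (∃ u ∈ compSet G S a, G.Adj u s) ∧
      (∃ u ∈ compSet G S b, G.Adj u s) := by
    intro s hs
    have hns : ¬SepSet G a b (S.erase s) := by
      intro hsep'
      have h1 := hmin _ hsep'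
      have h2 := Finset.card_erase_lt_of_mem hs
      omega
    exact ⟨sep_erase_neighbor hsep hs hns,
      sep_erase_neighbor (sepSet_symm hsep) hs (fun h => hns (sepSet_symm h))⟩
  set A := compSet G S a with hA
  set B := compSet G S b with hB
  have hAB : ∀ u ∈ A, ∀ v ∈ B, u ≠ v ∧ ¬G.Adj u v := sep_disjoint hsep
  have hpath : ∀ (c : V), (∀ s ∈ S, ∃ u ∈ compSet G S c, G.Adj u s) →
      ∃ p : G.Walk x y, ∀ z ∈ p.support, z = x ∨ z = y ∨ z ∈ compSet G S c := by
    intro c hc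
    obtain ⟨xa, hxa, hxadj⟩ := hc x hxS
    obtain ⟨ya, hya, hyadj⟩ := hc y hyS
    obtain ⟨hxaS, wxa, hwxa⟩ := hxa
    obtain ⟨hyaS, wya, hwya⟩ := hya
    refine ⟨Walk.cons hxadj.symm ((wxa.reverse.append wya).concat hyadj), ?_⟩
    intro z hz
    rw [Walk.support_cons, List.mem_cons] at hz
    rcases hz with rfl | hz
    · exact Or.inl rfl
    rw [Walk.support_concat, List.mem_append,
      List.mem_singleton] at hz
    rcases hz with hz | rfl
    · refine Or.inr (Or.inr ?_)
      rw [Walk.support_append, List.mem_append] at hz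
      rcases hz with hz | hz
      · have hz' : z ∈ wxa.support := by
          rwa [Walk.support_reverse, List.mem_reverse] at hz
        exact mem_compSet_of_walk wxa hwxa z hz'
      · exact mem_compSet_of_walk wya hwya z (List.mem_of_mem_tail hz)
    · exact Or.inr (Or.inl rfl)
  obtain ⟨p0, hp0⟩ := hpath a (fun s hs => (hnbr s hs).1)
  obtain ⟨q0, hq0⟩ := hpath b (fun s hs => (hnbr s hs).2)
  have hex : ∃ L, ∃ p : G.Walk x y, ∃ q : G.Walk y x, p.IsPath ∧ q.IsPath ∧
      (∀ z ∈ p.support, z = x ∨ z = y ∨ z ∈ A) ∧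
      (∀ z ∈ q.support, z = x ∨ z = y ∨ z ∈ B) ∧ p.length + q.length = L := by
    refine ⟨_, p0.bypass, q0.reverse.bypass, p0.bypass_isPath, q0.reverse.bypass_isPath,
      ?_, ?_, rfl⟩
    · exact fun z hz => hp0 z (p0.support_bypass_subset hz)
    · intro z hz
      have h1 : z ∈ q0.reverse.support := q0.reverse.support_bypass_subset hz
      rw [Walk.support_reverse, List.mem_reverse] at h1
      rcases hq0 z h1 with h | h | h
      · exact Or.inl h
      · exact Or.inr (Or.inl h)
      · exact Or.inr (Or.inr h)
  obtain ⟨p, q, hpP, hqP, hpA, hqB, hL⟩ := Nat.find_spec hex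
  have hplen : 2 ≤ p.length := two_le_length_of_not_adj hxy hnadj p
  have hqlen : 2 ≤ q.length :=
    two_le_length_of_not_adj (Ne.symm hxy) (fun h => hnadj h.symm) q
  -- decompose p
  have hpnn : ¬p.Nil := by
    rw [Walk.nil_iff_length_eq]; omega
  obtain ⟨w1, h1, p₁, hp_eq⟩ := Walk.not_nil_iff.mp hpnn
  have hp₁P : p₁.IsPath ∧ x ∉ p₁.support := by
    rw [hp_eq, Walk.cons_isPath_iff] at hpP
    exact hpP
  have hpP' : p.IsPath := by rw [hp_eq, Walk.cons_isPath_iff]; exact hp₁P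
  have hw1x : w1 ≠ x := fun h => hp₁P.2 (h ▸ p₁.start_mem_support)
  have hw1y : w1 ≠ y := by
    rintro rfl
    have : p₁ = Walk.nil := Walk.isPath_iff_eq_nil.mp hp₁P.1
    rw [hp_eq, this] at hplen
    simp at hplen
  have hw1p : w1 ∈ p.support := by
    rw [hp_eq, Walk.support_cons]
    exact List.mem_cons_of_mem _ p₁.start_mem_support
  have hw1A : w1 ∈ A := by
    rcases hpA w1 hw1p with h | h | h
    · exact absurd h hw1x
    · exact absurd h hw1y
    · exact h
  have hsupint : ∀ z, z ∈ p.support → z ∈ q.support → z = x ∨ z = y := by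
    intro z hzp hzq
    rcases hpA z hzp with h | h | hzA
    · exact Or.inl h
    · exact Or.inr h
    rcases hqB z hzq with h | h | hzB
    · exact Or.inl h
    · exact Or.inr h
    · exact absurd rfl (hAB z hzA z hzB).1
  have hynotqtail : y ∉ q.support.tail := by
    intro hmem
    have := (Walk.isPath_def q).mp hqP
    rw [q.support_eq_cons] at this
    exact (List.nodup_cons.mp this).1 hmem
  have happ : (p₁.append q).IsPath := by
    rw [Walk.isPath_def, Walk.support_append]
    refine List.Nodup.append ((Walk.isPath_def p₁).mp hp₁P.1) ?_ ?_
    · have := (Walk.isPath_def q).mp hqP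
      rw [q.support_eq_cons] at this
      exact (List.nodup_cons.mp this).2
    · intro z hzp₁ hzq
      have hzp : z ∈ p.support := by
        rw [hp_eq, Walk.support_cons]
        exact List.mem_cons_of_mem _ hzp₁
      rcases hsupint z hzp (List.mem_of_mem_tail hzq) with rfl | rfl
      · exact hp₁P.2 hzp₁
      · exact hynotqtail hzq
  have hedge : s(x, w1) ∉ (p₁.append q).edges := by
    intro hmem
    rw [Walk.edges_append, List.mem_append] at hmem
    rcases hmem with hm | hm
    · exact hp₁P.2 (p₁.fst_mem_support_of_mem_edges hm)
    · have hw1q : w1 ∈ q.support := q.snd_mem_support_of_mem_edges hm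
      rcases hqB w1 hw1q with h | h | h
      · exact hw1x h
      · exact hw1y h
      · exact absurd rfl (hAB w1 hw1A w1 h).1
  have hcyc : (p.append q).IsCycle := by
    rw [hp_eq, Walk.cons_append, Walk.cons_isCycle_iff]
    exact ⟨happ, hedge⟩
  have hclen : 4 ≤ (p.append q).length := by
    rw [Walk.length_append]; omega
  obtain ⟨u, v, huv, hu, hv, hne⟩ := hG x (p.append q) hcyc hclen
  have hmemsplit : ∀ z, z ∈ (p.append q).support → z ∈ p.support ∨ z ∈ q.support := by
    intro z hz
    rw [Walk.support_append, List.mem_append] at hz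
    rcases hz with hz | hz
    · exact Or.inl hz
    · exact Or.inr (List.mem_of_mem_tail hz)
  have hnep : s(u, v) ∉ p.edges := fun h =>
    hne (by rw [Walk.edges_append, List.mem_append]; exact Or.inl h)
  have hneq : s(u, v) ∉ q.edges := fun h =>
    hne (by rw [Walk.edges_append, List.mem_append]; exact Or.inr h)
  have hcontra_p : ¬(u ∈ p.support ∧ v ∈ p.support) := by
    rintro ⟨hup, hvp⟩
    obtain ⟨p'', hlt, hsub⟩ := shortcut p huv hup hvp hnep
    have hfind : Nat.find hex ≤ p''.bypass.length + q.length :=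
      Nat.find_le ⟨p''.bypass, q, p''.bypass_isPath, hqP,
        (fun z hz => hpA z (hsub z (p''.support_bypass_subset hz))), hqB, rfl⟩
    have hb := p''.length_bypass_le
    omega
  have hcontra_q : ¬(u ∈ q.support ∧ v ∈ q.support) := by
    rintro ⟨huq, hvq⟩
    obtain ⟨q'', hlt, hsub⟩ := shortcut q huv huq hvq hneq
    have hfind : Nat.find hex ≤ p.length + q''.bypass.length :=
      Nat.find_le ⟨p, q''.bypass, hpP, q''.bypass_isPath, hpA,
        (fun z hz => hqB z (hsub z (q''.support_bypass_subset hz))), rfl⟩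
    have hb := q''.length_bypass_le
    omega
  have hcross : ∀ u' v', G.Adj u' v' → u' ∈ p.support → v' ∈ q.support →
      u' ∉ q.support → v' ∉ p.support → False := by
    intro u' v' huv' hup hvq huq hvp
    have huA : u' ∈ A := by
      rcases hpA u' hup with rfl | rfl | h
      · exact absurd q.end_mem_support huq
      · exact absurd q.start_mem_support huq
      · exact h
    have hvB : v' ∈ B := by
      rcases hqB v' hvq with rfl | rfl | h
      · exact absurd p.start_mem_support hvp
      · exact absurd p.end_mem_support hvp
      · exact h
    exact (hAB u' huA v' hvB).2 huv'
  rcases hmemsplit u hu with hup | huq <;> rcases hmemsplit v hv with hvp | hvq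
  · exact hcontra_p ⟨hup, hvp⟩
  · by_cases hu2 : u ∈ q.support
    · exact hcontra_q ⟨hu2, hvq⟩
    by_cases hv2 : v ∈ p.support
    · exact hcontra_p ⟨hup, hv2⟩
    exact hcross u v huv hup hvq hu2 hv2
  · by_cases hv2 : v ∈ q.support
    · exact hcontra_q ⟨huq, hv2⟩
    by_cases hu2 : u ∈ p.support
    · exact hcontra_p ⟨hu2, hvp⟩
    exact hcross v u huv.symm hvp huq hv2 hu2
  · exact hcontra_q ⟨huq, hvq⟩

end MinSep

section Dirac

universe u

theorem dirac_aux : ∀ (n : ℕ) (V : Type u) (_ : DecidableEq V) (_ : Fintype V)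
    (G : SimpleGraph V), Fintype.card V ≤ n → IsChordal G →
    (∀ x y : V, x ≠ y → G.Adj x y) ∨
    ∃ a b : V, a ≠ b ∧ ¬G.Adj a b ∧ G.IsClique (G.neighborSet a) ∧
      G.IsClique (G.neighborSet b) := by
  intro n
  induction n with
  | zero =>
    intro V _ _ G hcard _
    left
    intro x
    exact absurd (Fintype.card_pos_iff.mpr ⟨x⟩) (by omega)
  | succ n ih =>
    intro V _ _ G hcard hG
    classical
    by_cases hcomp : ∀ x y : V, x ≠ y → G.Adj x y
    · exact Or.inl hcomp
    right
    push_neg at hcomp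
    obtain ⟨a, b, hab, hnadj⟩ := hcomp
    -- the universal separator
    have hS0 : SepSet G a b (Finset.univ \ {a, b}) := by
      refine ⟨by simp, by simp, fun w => ?_⟩
      have hnn : ¬w.Nil := by
        rw [Walk.nil_iff_length_eq]
        intro h0
        exact hab (Walk.eq_of_length_eq_zero h0)
      obtain ⟨c, hadj, w', hw⟩ := Walk.not_nil_iff.mp hnn
      have hca : c ≠ a := hadj.ne'
      have hcb : c ≠ b := fun h => hnadj (h ▸ hadj)
      refine ⟨c, ?_, by simp [hca, hcb]⟩
      rw [hw, Walk.support_cons]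
      exact List.mem_cons_of_mem _ w'.start_mem_support
    obtain ⟨S, hSmem, hSmin⟩ := Finset.exists_min_image
      (Finset.univ.filter fun S : Finset V => SepSet G a b S) Finset.card
      ⟨Finset.univ \ {a, b}, by simp [hS0]⟩
    have hsep : SepSet G a b S := (Finset.mem_filter.mp hSmem).2
    have hmin : ∀ S' : Finset V, SepSet G a b S' → S.card ≤ S'.card := by
      intro S' hS'
      exact hSmin S' (Finset.mem_filter.mpr ⟨Finset.mem_univ _, hS'⟩)
    have hclique : ∀ x ∈ S, ∀ y ∈ S, x ≠ y → G.Adj x y :=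
      minimal_sep_clique hG hsep hmin
    -- find a simplicial vertex inside a component
    have key : ∀ c d : V, SepSet G c d S →
        ∃ v ∈ compSet G S c, G.IsClique (G.neighborSet v) := by
      intro c d hsepcd
      set W : Set V := compSet G S c ∪ ↑S with hW
      letI : Fintype ↥W := Fintype.ofFinite ↥W
      have hcW : c ∈ compSet G S c := self_mem_compSet hsepcd.1
      have hdW : d ∉ W := by
        rintro (⟨hdS, w, hw⟩ | hdS)
        · obtain ⟨z, hz, hzS⟩ := hsepcd.2.2 w
          exact hw z hz hzS
        · exact hsepcd.2.1 hdS
      have hcardW : Fintype.card ↥W ≤ n := by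
        have hlt : Fintype.card ↥W < Fintype.card V :=
          Fintype.card_lt_of_injective_of_notMem Subtype.val Subtype.val_injective
            (by rwa [Subtype.range_coe])
        omega
      -- closure of neighbourhoods of component vertices
      have hclosure : ∀ v ∈ compSet G S c, ∀ z, G.Adj v z → z ∈ W := by
        intro v hv z hadj
        by_cases hzS : z ∈ S
        · exact Or.inr hzS
        · exact Or.inl (compSet_adj_closed hv hzS hadj)
      rcases ih ↥W inferInstance inferInstance (G.induce W) hcardW (hG.induce W) with hcompl | hsimp
      · refine ⟨c, hcW, fun z1 hz1 z2 hz2 hne => ?_⟩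
        have hW1 : z1 ∈ W := hclosure c hcW z1 hz1
        have hW2 : z2 ∈ W := hclosure c hcW z2 hz2
        exact hcompl ⟨z1, hW1⟩ ⟨z2, hW2⟩ (fun h => hne congr(($h).val))
      · obtain ⟨v1, v2, hne12, hnadj12, hs1, hs2⟩ := hsimp
        have hpick : (↑v1 ∈ compSet G S c ∧ (G.induce W).IsClique ((G.induce W).neighborSet v1)) ∨
            (↑v2 ∈ compSet G S c ∧ (G.induce W).IsClique ((G.induce W).neighborSet v2)) := by
          rcases v1.2 with h1 | h1
          · exact Or.inl ⟨h1, hs1⟩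
          rcases v2.2 with h2 | h2
          · exact Or.inr ⟨h2, hs2⟩
          · exact absurd (hclique _ h1 _ h2
              (fun h => hne12 (Subtype.ext h))) (fun h => hnadj12 h)
        obtain ⟨v, hvc, hvs⟩ : ∃ v : ↥W, ↑v ∈ compSet G S c ∧
            (G.induce W).IsClique ((G.induce W).neighborSet v) := by
          rcases hpick with ⟨h1, h2⟩ | ⟨h1, h2⟩
          · exact ⟨v1, h1, h2⟩
          · exact ⟨v2, h1, h2⟩
        refine ⟨↑v, hvc, fun z1 hz1 z2 hz2 hne => ?_⟩
        have hW1 : z1 ∈ W := hclosure _ hvc z1 hz1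
        have hW2 : z2 ∈ W := hclosure _ hvc z2 hz2
        have hadj1 : (G.induce W).Adj v ⟨z1, hW1⟩ := hz1
        have hadj2 : (G.induce W).Adj v ⟨z2, hW2⟩ := hz2
        have := hvs hadj1 hadj2 (fun h => hne congr(($h).val))
        exact this
    obtain ⟨vA, hvA, hsA⟩ := key a b hsep
    obtain ⟨vB, hvB, hsB⟩ := key b a (sepSet_symm hsep)
    obtain ⟨hne', hnadj'⟩ := sep_disjoint hsep vA hvA vB hvB
    exact ⟨vA, vB, hne', hnadj', hsA, hsB⟩

lemma exists_simplicial {V : Type u} [DecidableEq V] [Fintype V] [Nonempty V]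
    (G : SimpleGraph V) (hG : IsChordal G) : ∃ v : V, G.IsClique (G.neighborSet v) := by
  classical
  rcases dirac_aux (Fintype.card V) V inferInstance inferInstance G le_rfl hG with h | ⟨v, _, _, _, hv, _⟩
  · obtain ⟨v⟩ := ‹Nonempty V›
    refine ⟨v, fun z1 hz1 z2 hz2 hne => h z1 z2 hne⟩
  · exact ⟨v, hv⟩

end Dirac

section GramRep

theorem gram_rep : ∀ (m : ℕ) (V : Type) (_ : DecidableEq V) (_ : Fintype V)
    (G : SimpleGraph V), Fintype.card V ≤ m → IsChordal G →
    ∀ (r : ℕ) (X : V → V → ℝ), (∀ i j, X i j = X j i) →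
    (∀ s : Finset V, G.IsClique (↑s : Set V) →
      ∃ g : ↥s → EuclideanSpace ℝ (Fin r), ∀ i j : ↥s, ⟪g i, g j⟫_ℝ = X i j) →
    ∃ f : V → EuclideanSpace ℝ (Fin r), ∀ i j : V, (i = j ∨ G.Adj i j) →
      ⟪f i, f j⟫_ℝ = X i j := by
  intro m
  induction m with
  | zero =>
    intro V _ _ G hcard _ r X _ _
    exact ⟨fun _ => 0, fun i j _ => absurd (Fintype.card_pos_iff.mpr ⟨i⟩) (by omega)⟩
  | succ m ih =>
    intro V _ _ G hcard hG r X hsymm hX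
    classical
    rcases isEmpty_or_nonempty V with hV | hV
    · exact ⟨fun _ => 0, fun i j _ => absurd (Fintype.card_pos_iff.mpr ⟨i⟩)
        (by simp [Fintype.card_eq_zero])⟩
    obtain ⟨v, hv⟩ := exists_simplicial G hG
    set W : Set V := {x | x ≠ v} with hW
    letI : Fintype ↥W := Fintype.ofFinite ↥W
    have hcard' : Fintype.card ↥W ≤ m := by
      have hlt : Fintype.card ↥W < Fintype.card V :=
        Fintype.card_lt_of_injective_of_notMem Subtype.val Subtype.val_injective
          (by rw [Subtype.range_coe]; exact fun h => h rfl)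
      omega
    have hX' : ∀ s' : Finset ↥W, (G.induce W).IsClique (↑s' : Set ↥W) →
        ∃ g : ↥s' → EuclideanSpace ℝ (Fin r),
          ∀ i j : ↥s', ⟪g i, g j⟫_ℝ = X i.1.1 j.1.1 := by
      intro s' hs'
      set s : Finset V := s'.image Subtype.val with hs
      have hsclique : G.IsClique (↑s : Set V) := by
        intro x hx y hy hne
        rw [hs, Finset.coe_image] at hx hy
        obtain ⟨x', hx', rfl⟩ := hx
        obtain ⟨y', hy', rfl⟩ := hy
        exact hs' hx' hy' (fun h => hne (congrArg Subtype.val h))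
      obtain ⟨g, hg⟩ := hX s hsclique
      refine ⟨fun i => g ⟨i.1.1, by
        rw [hs]; exact Finset.mem_image_of_mem _ i.2⟩, fun i j => hg _ _⟩
    obtain ⟨f', hf'⟩ := ih ↥W inferInstance inferInstance (G.induce W) hcard'
      (hG.induce W) r (fun i j => X i.1 j.1) (fun i j => hsymm i.1 j.1) hX'
    -- the clique around v
    set NS : Finset V := (G.neighborSet v).toFinite.toFinset with hNS
    have hNSmem : ∀ x, x ∈ NS ↔ G.Adj v x := by
      intro x
      rw [hNS, Set.Finite.mem_toFinset, SimpleGraph.mem_neighborSet]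
    set s₀ : Finset V := insert v NS with hs₀
    have hs₀clique : G.IsClique (↑s₀ : Set V) := by
      intro x hx y hy hne
      rw [hs₀, Finset.coe_insert, Set.mem_insert_iff, Finset.mem_coe] at hx hy
      rcases hx with rfl | hx <;> rcases hy with rfl | hy
      · exact absurd rfl hne
      · exact (hNSmem y).mp hy
      · exact ((hNSmem x).mp hx).symm
      · exact hv ((hNSmem x).mp hx) ((hNSmem y).mp hy) hne
    obtain ⟨g, hg⟩ := hX s₀ hs₀clique
    have hvmem : v ∈ s₀ := Finset.mem_insert_self _ _
    have hNSs₀ : ∀ x ∈ NS, x ∈ s₀ := fun x hx => Finset.mem_insert_of_mem hx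
    have hNSW : ∀ x ∈ NS, x ∈ W := by
      intro x hx
      have := (hNSmem x).mp hx
      exact fun h => G.loopless.irrefl v (h ▸ this)
    set u : ↥NS → EuclideanSpace ℝ (Fin r) := fun x => g ⟨x.1, hNSs₀ x.1 x.2⟩ with hu
    set w' : ↥NS → EuclideanSpace ℝ (Fin r) := fun x => f' ⟨x.1, hNSW x.1 x.2⟩ with hw'
    have hmatch : ∀ i j : ↥NS, ⟪u i, u j⟫_ℝ = ⟪w' i, w' j⟫_ℝ := by
      intro i j
      rw [hu, hw']
      simp only
      rw [hg]
      have : (i = j) ∨ (G.induce W).Adj ⟨i.1, hNSW i.1 i.2⟩ ⟨j.1, hNSW j.1 j.2⟩ := by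
        by_cases hij : i = j
        · exact Or.inl hij
        · refine Or.inr ?_
          have h1 := (hNSmem i.1).mp i.2
          have h2 := (hNSmem j.1).mp j.2
          exact hv h1 h2 (fun h => hij (Subtype.ext h))
      rcases this with rfl | hadj
      · exact (hf' ⟨i.1, hNSW i.1 i.2⟩ ⟨i.1, hNSW i.1 i.2⟩ (Or.inl rfl)).symm
      · exact (hf' _ _ (Or.inr hadj)).symm
    obtain ⟨Q, hQ⟩ := gram_glue u w' hmatch
    set gv := g ⟨v, hvmem⟩ with hgv
    refine ⟨fun x => if hx : x = v then Q gv else f' ⟨x, hx⟩, fun i j hij => ?_⟩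
    by_cases hiv : i = v <;> by_cases hjv : j = v
    · simp only [dif_pos hiv, dif_pos hjv]
      rw [Q.inner_map_map, hgv, hg, hiv, hjv]
    · have hadj : G.Adj v j := by
        rcases hij with h | h
        · exact absurd (hiv ▸ h).symm hjv
        · exact hiv ▸ h
      have hjNS : j ∈ NS := (hNSmem j).mpr hadj
      simp only [dif_pos hiv, dif_neg hjv]
      have hfj : f' ⟨j, hjv⟩ = Q (u ⟨j, hjNS⟩) := by
        rw [hQ ⟨j, hjNS⟩, hw']
      rw [hfj, Q.inner_map_map, hgv, hu]
      have := hg ⟨v, hvmem⟩ ⟨j, hNSs₀ j hjNS⟩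
      rw [this, hiv]
    · have hadj : G.Adj v i := by
        rcases hij with h | h
        · exact absurd (hjv ▸ h) hiv
        · exact (hjv ▸ h).symm
      have hiNS : i ∈ NS := (hNSmem i).mpr hadj
      simp only [dif_neg hiv, dif_pos hjv]
      have hfi : f' ⟨i, hiv⟩ = Q (u ⟨i, hiNS⟩) := by
        rw [hQ ⟨i, hiNS⟩, hw']
      rw [hfi, Q.inner_map_map, hgv, hu]
      have := hg ⟨i, hNSs₀ i hiNS⟩ ⟨v, hvmem⟩
      rw [this, hjv]
    · simp only [dif_neg hiv, dif_neg hjv]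
      rcases hij with rfl | hadj
      · exact hf' ⟨i, hiv⟩ ⟨i, hjv⟩ (Or.inl rfl)
      · exact hf' ⟨i, hiv⟩ ⟨j, hjv⟩ (Or.inr hadj)

end GramRep

lemma exists_maxclique {n : ℕ} (G : SimpleGraph (Fin n)) (s : Finset (Fin n))
    (hs : G.IsClique (↑s : Set (Fin n))) :
    ∃ C : Finset (Fin n), s ⊆ C ∧ IsMaxClique G (↑C : Set (Fin n)) := by
  classical
  obtain ⟨C, hCmem, hCmax⟩ := Finset.exists_max_image
    (Finset.univ.filter fun t : Finset (Fin n) => G.IsClique (↑t : Set (Fin n)) ∧ s ⊆ t)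
    Finset.card ⟨s, by simp [hs]⟩
  rw [Finset.mem_filter] at hCmem
  refine ⟨C, hCmem.2.2, hCmem.2.1, fun t ht hsub => ?_⟩
  have htfin : t.Finite := Set.toFinite t
  have ht' : G.IsClique (↑htfin.toFinset : Set (Fin n)) := by
    rwa [Set.Finite.coe_toFinset]
  have hCt : C ⊆ htfin.toFinset := fun x hx =>
    htfin.mem_toFinset.mpr (hsub (Finset.mem_coe.mpr hx))
  have hst : s ⊆ htfin.toFinset := hCmem.2.2.trans hCt
  have hcard := hCmax htfin.toFinset
    (Finset.mem_filter.mpr ⟨Finset.mem_univ _, ht', hst⟩)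
  have hCeq : C = htfin.toFinset := Finset.eq_of_subset_of_card_le hCt hcard
  rw [hCeq, Set.Finite.coe_toFinset]

lemma rank_col_submatrix_le {n r : ℕ} (B : Matrix (Fin r) (Fin n) ℝ) {m : Type*}
    [Fintype m] (u : m → Fin n) : (B.submatrix id u).rank ≤ B.rank := by
  rw [Matrix.rank_eq_finrank_span_cols, Matrix.rank_eq_finrank_span_cols]
  apply Submodule.finrank_mono
  apply Submodule.span_mono
  rintro x ⟨j, rfl⟩
  exact ⟨u j, rfl⟩

/-- Dancis' minimum-rank PSD completion theorem: if a partial symmetric matrix `X` with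
chordal sparsity pattern `G` admits a PSD completion, then it admits a PSD completion
whose rank equals the maximum over all maximal cliques `C` of `rank X[C, C]`. -/
theorem dancis_min_rank_completion {n : ℕ} (G : SimpleGraph (Fin n)) (hG : IsChordal G)
    (X : Matrix (Fin n) (Fin n) ℝ) (hsymm : X.IsSymm) (h : HasPSDCompletion G X) :
    ∃ Y : Matrix (Fin n) (Fin n) ℝ, Y.PosSemidef ∧ (∀ i, Y i i = X i i) ∧
      (∀ i j, G.Adj i j → Y i j = X i j) ∧
      Y.rank = ⨆ C : {C : Finset (Fin n) // IsMaxClique G (C : Set (Fin n))},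
        (X.submatrix (fun c : {x // x ∈ C.val} => (c : Fin n))
          (fun c : {x // x ∈ C.val} => (c : Fin n))).rank := by
  classical
  obtain ⟨Y₀, hY₀psd, hY₀diag, hY₀edge⟩ := h
  set r : ℕ := ⨆ C : {C : Finset (Fin n) // IsMaxClique G (C : Set (Fin n))},
        (X.submatrix (fun c : {x // x ∈ C.val} => (c : Fin n))
          (fun c : {x // x ∈ C.val} => (c : Fin n))).rank with hrdef
  have hKne : Nonempty {C : Finset (Fin n) // IsMaxClique G (C : Set (Fin n))} := by
    obtain ⟨C, _, hC⟩ := exists_maxclique G ∅ (by simp)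
    exact ⟨⟨C, hC⟩⟩
  have hagreeY₀ : ∀ (C : Finset (Fin n)), G.IsClique (↑C : Set (Fin n)) →
      X.submatrix (fun c : {x // x ∈ C} => (c : Fin n)) (fun c : {x // x ∈ C} => (c : Fin n)) =
      Y₀.submatrix (fun c : {x // x ∈ C} => (c : Fin n))
        (fun c : {x // x ∈ C} => (c : Fin n)) := by
    intro C hC
    ext i j
    simp only [Matrix.submatrix_apply]
    by_cases hij : (i : Fin n) = (j : Fin n)
    · rw [hij]
      exact (hY₀diag _).symm
    · exact (hY₀edge _ _ (hC (Finset.mem_coe.mpr i.2) (Finset.mem_coe.mpr j.2) hij)).symm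
  have hrank_le_r : ∀ (C : Finset (Fin n)) (hC : IsMaxClique G (↑C : Set (Fin n))),
      (X.submatrix (fun c : {x // x ∈ C} => (c : Fin n))
        (fun c : {x // x ∈ C} => (c : Fin n))).rank ≤ r := by
    intro C hC
    have hb : BddAbove (Set.range fun C : {C : Finset (Fin n) //
        IsMaxClique G (C : Set (Fin n))} =>
        (X.submatrix (fun c : {x // x ∈ C.val} => (c : Fin n))
          (fun c : {x // x ∈ C.val} => (c : Fin n))).rank) :=
      Set.Finite.bddAbove (Set.finite_range _)
    exact le_ciSup hb ⟨C, hC⟩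
  have hXcl : ∀ s : Finset (Fin n), G.IsClique (↑s : Set (Fin n)) →
      ∃ g : {x // x ∈ s} → EuclideanSpace ℝ (Fin r),
        ∀ i j : {x // x ∈ s}, ⟪g i, g j⟫_ℝ = X i.1 j.1 := by
    intro s hs
    obtain ⟨C, hsub, hCmax⟩ := exists_maxclique G s hs
    have hpsd : (X.submatrix (fun c : {x // x ∈ C} => (c : Fin n))
        (fun c : {x // x ∈ C} => (c : Fin n))).PosSemidef := by
      rw [hagreeY₀ C hCmax.1]
      exact hY₀psd.submatrix _
    obtain ⟨g, hg⟩ := psd_gram _ hpsd (hrank_le_r C hCmax)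
    exact ⟨fun i => g ⟨i.1, hsub i.2⟩, fun i j => hg _ _⟩
  obtain ⟨f, hf⟩ := gram_rep n (Fin n) inferInstance inferInstance G (by simp) hG r
    (fun i j => X i j) (fun i j => Matrix.IsSymm.apply hsymm j i) hXcl
  set B : Matrix (Fin r) (Fin n) ℝ := Matrix.of fun k i => f i k with hB
  set Y : Matrix (Fin n) (Fin n) ℝ := Matrix.of fun i j => ⟪f i, f j⟫_ℝ with hY
  have hYB : Y = Bᴴ * B := by
    ext i j
    simp only [hY, hB, Matrix.of_apply, Matrix.mul_apply, Matrix.conjTranspose_apply]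
    rw [PiLp.inner_apply]
    simp [RCLike.inner_apply, starRingEnd_apply]
    exact Finset.sum_congr rfl fun _ _ => mul_comm _ _
  have hdiag : ∀ i, Y i i = X i i := fun i => hf i i (Or.inl rfl)
  have hedge : ∀ i j, G.Adj i j → Y i j = X i j := fun i j hij => hf i j (Or.inr hij)
  have hpsdY : Y.PosSemidef := by
    rw [hYB]
    exact Matrix.posSemidef_conjTranspose_mul_self B
  have hrankY_le : Y.rank ≤ r := by
    rw [hYB, Matrix.rank_conjTranspose_mul_self]
    calc B.rank ≤ Fintype.card (Fin r) := B.rank_le_card_height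
    _ = r := Fintype.card_fin r
  have hr_le : r ≤ Y.rank := by
    rw [hrdef]
    refine ciSup_le fun C => ?_
    have hXYC : X.submatrix (fun c : {x // x ∈ C.val} => (c : Fin n))
        (fun c : {x // x ∈ C.val} => (c : Fin n)) =
        Y.submatrix (fun c : {x // x ∈ C.val} => (c : Fin n))
          (fun c : {x // x ∈ C.val} => (c : Fin n)) := by
      ext i j
      simp only [Matrix.submatrix_apply]
      by_cases hij : (i : Fin n) = (j : Fin n)
      · rw [hij]
        exact (hdiag _).symm
      · exact (hedge _ _ (C.2.1 (Finset.mem_coe.mpr i.2) (Finset.mem_coe.mpr j.2)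
          hij)).symm
    rw [hXYC, hYB]
    have hsub : (Bᴴ * B).submatrix (fun c : {x // x ∈ C.val} => (c : Fin n))
        (fun c : {x // x ∈ C.val} => (c : Fin n)) =
        (B.submatrix id (fun c : {x // x ∈ C.val} => (c : Fin n)))ᴴ *
          (B.submatrix id (fun c : {x // x ∈ C.val} => (c : Fin n))) := by
      ext i j
      simp [Matrix.mul_apply, Matrix.conjTranspose_apply, Matrix.submatrix_apply]
    rw [hsub, Matrix.rank_conjTranspose_mul_self, Matrix.rank_conjTranspose_mul_self]
    exact rank_col_submatrix_le B _
  exact ⟨Y, hpsdY, hdiag, hedge, le_antisymm hrankY_le hr_le⟩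
end
end

section
/- If X = uuᵀ for u = (1, r, s) encoding the subspace clustering variables, then the entries of X corresponding to products s_{i₁j₁}s_{i₂j₂} with i₁ ≠ i₂ and j₁ ≠ j₂ are not needed to express any of the constraints (4a)–(4d); formally, each constraint of problem (4), when lifted to linear constraints ⟨A, X⟩ = b on X, uses A supported only on entries (p,q) where p and q index the same point j or involve the leading 1 or the same subspace's normal coordinates. -/
open Matrix

namespace SubspaceClusteringLift

variable (Ns Np D : ℕ)

/-- Index type of the lifted vector `u = (1, r₁, …, r_{Ns}, s₁₁, …, s_{Ns Np})`:
`none` is the leading `1`, `some (.inl (i, k))` is the `k`-th coordinate of the normal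
`r i`, and `some (.inr (i, j))` is the assignment variable `s i j`. -/
abbrev Idx := Option ((Fin Ns × Fin D) ⊕ (Fin Ns × Fin Np))

/-- The lifted vector `u = (1, r, s)`. -/
def u (r : Fin Ns → Fin D → ℝ) (s : Fin Ns → Fin Np → ℝ) : Idx Ns Np D → ℝ
  | none => 1
  | some (.inl (i, k)) => r i k
  | some (.inr (i, j)) => s i j

/-- The lifted rank-one matrix `X = u uᵀ`. -/
def liftX (r : Fin Ns → Fin D → ℝ) (s : Fin Ns → Fin Np → ℝ) :
    Matrix (Idx Ns Np D) (Idx Ns Np D) ℝ :=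
  vecMulVec (u Ns Np D r s) (u Ns Np D r s)

/-- The subspace index carried by an index of `u`, if any. -/
def subOf : Idx Ns Np D → Option (Fin Ns)
  | none => none
  | some (.inl (i, _)) => some i
  | some (.inr (i, _)) => some i

/-- The point index carried by an index of `u`, if any. -/
def ptOf : Idx Ns Np D → Option (Fin Np)
  | some (.inr (_, j)) => some j
  | _ => none

/-- Whether an index of `u` is a coordinate of some subspace normal `r i`. -/
def isNormal : Idx Ns Np D → Prop
  | some (.inl _) => True
  | _ => False

/-- The allowed entries `(p, q)` of `X`: `p` and `q` index the same point `j`, or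
involve the leading `1`, or involve the same subspace's normal coordinates.  In
particular entries corresponding to products `s i₁ j₁ * s i₂ j₂` with `i₁ ≠ i₂` and
`j₁ ≠ j₂` are excluded. -/
def allowed (p q : Idx Ns Np D) : Prop :=
  p = none ∨ q = none ∨
    (ptOf Ns Np D p = ptOf Ns Np D q ∧ ptOf Ns Np D p ≠ none) ∨
    (subOf Ns Np D p = subOf Ns Np D q ∧
      (isNormal Ns Np D p ∨ isNormal Ns Np D q))

lemma trace_std {n : Type*} [Fintype n] [DecidableEq n] (p q : n) (c : ℝ)
    (M : Matrix n n ℝ) : ((Matrix.single p q c)ᵀ * M).trace = c * M p q := by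
  simp [Matrix.trace, Matrix.diag, Matrix.mul_apply, Matrix.single,
    Matrix.transpose_apply, ite_and, Finset.sum_ite_eq]

lemma std_support {n : Type*} [DecidableEq n] (p q p' q' : n) (c : ℝ)
    (h : Matrix.single p q c p' q' ≠ 0) : p' = p ∧ q' = q := by
  by_contra hc
  apply h
  simp only [Matrix.single, Matrix.of_apply]
  rw [if_neg]
  intro ⟨h1, h2⟩
  exact hc ⟨h1.symm, h2.symm⟩

lemma liftX_apply (r : Fin Ns → Fin D → ℝ) (s : Fin Ns → Fin Np → ℝ)
    (p q : Idx Ns Np D) : liftX Ns Np D r s p q = u Ns Np D r s p * u Ns Np D r s q := rfl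

/-- Each constraint of the subspace clustering feasibility problem (4), lifted to linear
(in)equalities `⟨A, X⟩ = b` (resp. `≤ b`) on `X = u uᵀ`, only uses matrices `A`
supported on allowed entries: entries coupling `s i₁ j₁` with `s i₂ j₂` for `i₁ ≠ i₂`,
`j₁ ≠ j₂` are never needed. -/
theorem constraints_supported_on_allowed (x : Fin Np → Fin D → ℝ) (ε : ℝ) :
    -- (4a): `s i j * |r iᵀ x j| ≤ s i j * ε`, using the binary constraint (4b)
    (∀ (i : Fin Ns) (j : Fin Np), ∃ A₁ A₂ : Matrix (Idx Ns Np D) (Idx Ns Np D) ℝ,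
      (∀ p q, A₁ p q ≠ 0 → allowed Ns Np D p q) ∧
      (∀ p q, A₂ p q ≠ 0 → allowed Ns Np D p q) ∧
      ∀ (r : Fin Ns → Fin D → ℝ) (s : Fin Ns → Fin Np → ℝ),
        (∀ i' j', s i' j' = (s i' j') ^ 2) →
        (((A₁ᵀ * liftX Ns Np D r s).trace ≤ 0 ∧ (A₂ᵀ * liftX Ns Np D r s).trace ≤ 0) ↔
          s i j * |∑ k, r i k * x j k| ≤ s i j * ε)) ∧
    -- (4b): `s i j = s i j ^ 2`
    (∀ (i : Fin Ns) (j : Fin Np), ∃ A : Matrix (Idx Ns Np D) (Idx Ns Np D) ℝ,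
      (∀ p q, A p q ≠ 0 → allowed Ns Np D p q) ∧
      ∀ (r : Fin Ns → Fin D → ℝ) (s : Fin Ns → Fin Np → ℝ),
        ((Aᵀ * liftX Ns Np D r s).trace = 0 ↔ s i j = (s i j) ^ 2)) ∧
    -- (4c): `∑ i, s i j = 1`
    (∀ j : Fin Np, ∃ A : Matrix (Idx Ns Np D) (Idx Ns Np D) ℝ,
      (∀ p q, A p q ≠ 0 → allowed Ns Np D p q) ∧
      ∀ (r : Fin Ns → Fin D → ℝ) (s : Fin Ns → Fin Np → ℝ),
        ((Aᵀ * liftX Ns Np D r s).trace = 1 ↔ ∑ i, s i j = 1)) ∧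
    -- (4d): `r iᵀ r i = 1`
    (∀ i : Fin Ns, ∃ A : Matrix (Idx Ns Np D) (Idx Ns Np D) ℝ,
      (∀ p q, A p q ≠ 0 → allowed Ns Np D p q) ∧
      ∀ (r : Fin Ns → Fin D → ℝ) (s : Fin Ns → Fin Np → ℝ),
        ((Aᵀ * liftX Ns Np D r s).trace = 1 ↔ ∑ k, r i k * r i k = 1)) := by
  have hal1 : ∀ q : Idx Ns Np D, allowed Ns Np D none q := fun q => Or.inl rfl
  have hal2 : ∀ (i : Fin Ns) (j : Fin Np),
      allowed Ns Np D (some (Sum.inr (i, j))) (some (Sum.inr (i, j))) := by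
    intro i j
    exact Or.inr (Or.inr (Or.inl ⟨rfl, by simp [ptOf]⟩))
  have hal3 : ∀ (i : Fin Ns) (j : Fin Np) (k : Fin D),
      allowed Ns Np D (some (Sum.inr (i, j))) (some (Sum.inl (i, k))) := by
    intro i j k
    exact Or.inr (Or.inr (Or.inr ⟨rfl, Or.inr trivial⟩))
  have hal4 : ∀ (i : Fin Ns) (k : Fin D),
      allowed Ns Np D (some (Sum.inl (i, k))) (some (Sum.inl (i, k))) := by
    intro i k
    exact Or.inr (Or.inr (Or.inr ⟨rfl, Or.inl trivial⟩))
  refine ⟨?_, ?_, ?_, ?_⟩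
  · -- (4a)
    intro i j
    refine ⟨(∑ k, Matrix.single (some (Sum.inr (i, j))) (some (Sum.inl (i, k))) (x j k))
        - Matrix.single none (some (Sum.inr (i, j))) ε,
      (∑ k, Matrix.single (some (Sum.inr (i, j))) (some (Sum.inl (i, k))) (-(x j k)))
        - Matrix.single none (some (Sum.inr (i, j))) ε, ?_, ?_, ?_⟩
    · intro p q h
      rw [Matrix.sub_apply, Matrix.sum_apply] at h
      by_cases h1 : Matrix.single none (some (Sum.inr (i, j))) ε p q ≠ 0
      · obtain ⟨hp, hq⟩ := std_support _ _ _ _ _ h1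
        subst hp; subst hq; exact hal1 _
      · push_neg at h1
        rw [h1, sub_zero] at h
        obtain ⟨k, _, hk⟩ := Finset.exists_ne_zero_of_sum_ne_zero h
        obtain ⟨hp, hq⟩ := std_support _ _ _ _ _ hk
        subst hp; subst hq; exact hal3 i j k
    · intro p q h
      rw [Matrix.sub_apply, Matrix.sum_apply] at h
      by_cases h1 : Matrix.single none (some (Sum.inr (i, j))) ε p q ≠ 0
      · obtain ⟨hp, hq⟩ := std_support _ _ _ _ _ h1
        subst hp; subst hq; exact hal1 _
      · push_neg at h1
        rw [h1, sub_zero] at h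
        obtain ⟨k, _, hk⟩ := Finset.exists_ne_zero_of_sum_ne_zero h
        obtain ⟨hp, hq⟩ := std_support _ _ _ _ _ hk
        subst hp; subst hq; exact hal3 i j k
    · intro r s hbin
      have hs : 0 ≤ s i j := by rw [hbin i j]; positivity
      have htr : ∀ (c : Fin D → ℝ) (e : ℝ),
          ((((∑ k, Matrix.single (some (Sum.inr (i, j))) (some (Sum.inl (i, k))) (c k))
            - Matrix.single none (some (Sum.inr (i, j))) e)ᵀ)
              * liftX Ns Np D r s).trace
          = (∑ k, c k * (s i j * r i k)) - e * s i j := by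
        intro c e
        rw [Matrix.transpose_sub, Matrix.transpose_sum, Matrix.sub_mul,
          Matrix.trace_sub, Finset.sum_mul, Matrix.trace_sum]
        simp only [trace_std, liftX_apply, u, one_mul]
      rw [htr, htr]
      have habs : s i j * |∑ k, r i k * x j k| = |s i j * ∑ k, r i k * x j k| := by
        rw [abs_mul, abs_of_nonneg hs]
      have hre : ∀ c : Fin D → ℝ, (∑ k, c k * (s i j * r i k))
          = s i j * ∑ k, r i k * c k := by
        intro c
        rw [Finset.mul_sum]
        exact Finset.sum_congr rfl fun k _ => by ring
      have hneg : (∑ k, r i k * -x j k) = -∑ k, r i k * x j k := by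
        simp [mul_neg]
      rw [habs, abs_le, hre, hre, hneg, mul_neg, sub_nonpos, sub_nonpos]
      constructor
      · rintro ⟨h1, h2⟩
        exact ⟨by linarith, by linarith⟩
      · rintro ⟨h1, h2⟩
        exact ⟨by linarith, by linarith⟩
  · -- (4b)
    intro i j
    refine ⟨Matrix.single none (some (Sum.inr (i, j))) 1
      - Matrix.single (some (Sum.inr (i, j))) (some (Sum.inr (i, j))) 1, ?_, ?_⟩
    · intro p q h
      rw [Matrix.sub_apply] at h
      by_cases h1 : Matrix.single none (some (Sum.inr (i, j))) (1:ℝ) p q ≠ 0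
      · obtain ⟨hp, hq⟩ := std_support _ _ _ _ _ h1
        subst hp; subst hq; exact hal1 _
      · push_neg at h1
        rw [h1, zero_sub, neg_ne_zero] at h
        obtain ⟨hp, hq⟩ := std_support _ _ _ _ _ h
        subst hp; subst hq; exact hal2 i j
    · intro r s
      rw [Matrix.transpose_sub, Matrix.sub_mul, Matrix.trace_sub, trace_std, trace_std,
        liftX_apply, liftX_apply]
      simp only [u, one_mul]
      constructor
      · intro h; nlinarith [sub_eq_zero.mp h]
      · intro h; rw [sq] at h; rw [← h]; ring
  · -- (4c)
    intro j
    refine ⟨∑ i, Matrix.single none (some (Sum.inr (i, j))) 1, ?_, ?_⟩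
    · intro p q h
      rw [Matrix.sum_apply] at h
      obtain ⟨i, _, hk⟩ := Finset.exists_ne_zero_of_sum_ne_zero h
      obtain ⟨hp, hq⟩ := std_support _ _ _ _ _ hk
      subst hp; subst hq; exact hal1 _
    · intro r s
      rw [Matrix.transpose_sum, Finset.sum_mul, Matrix.trace_sum]
      have : ∀ i : Fin Ns, ((Matrix.single (none : Idx Ns Np D)
          (some (Sum.inr (i, j))) (1:ℝ))ᵀ * liftX Ns Np D r s).trace = s i j := by
        intro i
        rw [trace_std, liftX_apply]
        simp [u]
      rw [Finset.sum_congr rfl fun i _ => this i]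
  · -- (4d)
    intro i
    refine ⟨∑ k, Matrix.single (some (Sum.inl (i, k))) (some (Sum.inl (i, k))) 1, ?_, ?_⟩
    · intro p q h
      rw [Matrix.sum_apply] at h
      obtain ⟨k, _, hk⟩ := Finset.exists_ne_zero_of_sum_ne_zero h
      obtain ⟨hp, hq⟩ := std_support _ _ _ _ _ hk
      subst hp; subst hq; exact hal4 i k
    · intro r s
      rw [Matrix.transpose_sum, Finset.sum_mul, Matrix.trace_sum]
      have : ∀ k : Fin D, ((Matrix.single (some (Sum.inl (i, k)) : Idx Ns Np D)
          (some (Sum.inl (i, k))) (1:ℝ))ᵀ * liftX Ns Np D r s).trace = r i k * r i k := by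
        intro k
        rw [trace_std, liftX_apply]
        simp [u]
      rw [Finset.sum_congr rfl fun k _ => this k]


end SubspaceClusteringLift
end
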